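/- arXiv:1409.3154 — 4 statements merged into one kernel-verified Lean document; each statement's English description precedes it below -/
import Mathlib

section
/- Let X be a subordinator (increasing Lévy process) which is not a compound Poisson process and with P{X_1 = 0} < 1. Then for every a > 0 and every r ≥ 0, E[e^{a T_r}] < ∞, where T_r is the first passage time of the level r. -/
set_option maxHeartbeats 1000000


open MeasureTheory ProbabilityTheory Set
open scoped ENNReal

/-- A (real-valued) Lévy process: càdlàg paths, `X 0 = 0`, stationary and independent
increments. -/
structure IsLevy {Ω : Type*} [MeasurableSpace Ω] (P : Measure Ω) (X : ℝ → Ω → ℝ) : Prop where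
  meas : ∀ t, Measurable (X t)
  init : ∀ ω, X 0 ω = 0
  rightCont : ∀ ω, ∀ t : ℝ, ContinuousWithinAt (fun s => X s ω) (Set.Ici t) t
  leftLim : ∀ ω, ∀ t : ℝ, ∃ l : ℝ, Filter.Tendsto (fun s => X s ω) (nhdsWithin t (Set.Iio t)) (nhds l)
  stationary : ∀ s t : ℝ, 0 ≤ s → s ≤ t →
    P.map (fun ω => X t ω - X s ω) = P.map (X (t - s))
  indepIncr : ∀ (n : ℕ) (t : ℕ → ℝ), Monotone t → 0 ≤ t 0 →
    iIndepFun
      (fun (i : Fin n) ω => X (t ((i : ℕ) + 1)) ω - X (t (i : ℕ)) ω) P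

/-- First passage time of the level `r` by the path `t ↦ X t ω` (`inf ∅ = ∞`). -/
noncomputable def passageTime {Ω : Type*} (X : ℝ → Ω → ℝ) (r : ℝ) (ω : Ω) : ℝ≥0∞ :=
  sInf (ENNReal.ofReal '' {t : ℝ | 0 ≤ t ∧ r < X t ω})

/-- `e^{a x}` for `x ∈ [0,∞]`, with value `∞` at `∞`. -/
noncomputable def eexp (a : ℝ) (x : ℝ≥0∞) : ℝ≥0∞ :=
  if x = ∞ then ∞ else ENNReal.ofReal (Real.exp (a * x.toReal))

/-- The increment `X (c+1) - X c` is independent of `X c`. -/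
lemma indep_incr_aux {Ω : Type*} [MeasurableSpace Ω] {P : Measure Ω} {X : ℝ → Ω → ℝ}
    (hX : IsLevy P X) (c : ℝ) (hc : 0 ≤ c) :
    IndepFun (X c) (fun ω => X (c + 1) ω - X c ω) P := by
  set t : ℕ → ℝ := fun k => if k = 0 then 0 else c + k - 1 with ht
  have ht0' : t 0 = 0 := by simp [ht]
  have htv : ∀ m : ℕ, m ≠ 0 → t m = c + m - 1 := fun m hm => by simp [ht, hm]
  have htnn : ∀ m : ℕ, 0 ≤ t m := by
    intro m
    rcases Nat.eq_zero_or_pos m with hm | hm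
    · subst hm; rw [ht0']
    · rw [htv m hm.ne']
      have : (1 : ℝ) ≤ (m : ℝ) := by exact_mod_cast hm
      linarith
  have hmt : Monotone t := by
    intro j k hjk
    rcases Nat.eq_zero_or_pos j with hj | hj
    · subst hj; rw [ht0']; exact htnn k
    · have hj' : j ≠ 0 := hj.ne'
      have hk' : k ≠ 0 := by omega
      have hcast : (j : ℝ) ≤ (k : ℝ) := by exact_mod_cast hjk
      rw [htv j hj', htv k hk']
      linarith
  have h := hX.indepIncr 2 t hmt (by rw [ht0'])
  have h01 := h.indepFun (show (0 : Fin 2) ≠ 1 by decide)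
  have ht1 : t 1 = c := by rw [htv 1 one_ne_zero]; norm_num
  have ht2 : t 2 = c + 1 := by rw [htv 2 two_ne_zero]; push_cast; ring_nf
  simp only [Fin.val_zero, Fin.val_one, zero_add] at h01
  norm_num [ht0', ht1, ht2] at h01
  have e1 : (fun ω => X c ω - X 0 ω) = X c := by
    funext ω; rw [hX.init]; ring
  rwa [e1] at h01

/-- Laplace transform multiplicativity along integer times. -/
lemma rho_pow_aux {Ω : Type*} [MeasurableSpace Ω] {P : Measure Ω} [IsProbabilityMeasure P]
    {X : ℝ → Ω → ℝ} (hX : IsLevy P X) (lam : ℝ) (n : ℕ) :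
    ∫⁻ ω, ENNReal.ofReal (Real.exp (-lam * X (n : ℝ) ω)) ∂P
      = (∫⁻ ω, ENNReal.ofReal (Real.exp (-lam * X 1 ω)) ∂P) ^ n := by
  set f : ℝ → ℝ≥0∞ := fun x => ENNReal.ofReal (Real.exp (-lam * x)) with hf
  have hfm : Measurable f :=
    (Real.continuous_exp.comp ((continuous_const).mul continuous_id)).measurable.ennreal_ofReal
  induction n with
  | zero =>
    simp [hX.init, Real.exp_zero]
  | succ n ih =>
    have hXn : Measurable (X (n : ℝ)) := hX.meas _
    have hinc : Measurable (fun ω => X ((n : ℝ) + 1) ω - X (n : ℝ) ω) :=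
      (hX.meas _).sub (hX.meas _)
    have hsplit : ∀ ω, f (X ((n : ℕ) + 1 : ℕ) ω)
        = f (X (n : ℝ) ω) * f (X ((n : ℝ) + 1) ω - X (n : ℝ) ω) := by
      intro ω
      have hc : ((n : ℕ) + 1 : ℕ) = ((n : ℝ) + 1 : ℝ) := by push_cast; ring
      rw [hc]
      simp only [hf]
      rw [← ENNReal.ofReal_mul (Real.exp_nonneg _), ← Real.exp_add]
      congr 1
      ring
    have hindep := (indep_incr_aux hX (n : ℝ) (Nat.cast_nonneg n)).comp hfm hfm
    calc ∫⁻ ω, f (X ((n : ℕ) + 1 : ℕ) ω) ∂P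
        = ∫⁻ ω, f (X (n : ℝ) ω) * f (X ((n : ℝ) + 1) ω - X (n : ℝ) ω) ∂P := by
          exact lintegral_congr fun ω => hsplit ω
      _ = (∫⁻ ω, f (X (n : ℝ) ω) ∂P)
            * ∫⁻ ω, f (X ((n : ℝ) + 1) ω - X (n : ℝ) ω) ∂P :=
          lintegral_mul_eq_lintegral_mul_lintegral_of_indepFun''
            ((hfm.comp hXn).aemeasurable) ((hfm.comp hinc).aemeasurable) hindep
      _ = (∫⁻ ω, f (X (n : ℝ) ω) ∂P) * ∫⁻ ω, f (X 1 ω) ∂P := by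
          congr 1
          have hmap := hX.stationary (n : ℝ) ((n : ℝ) + 1) (Nat.cast_nonneg n) (by linarith)
          rw [show ((n : ℝ) + 1) - (n : ℝ) = 1 by ring] at hmap
          calc ∫⁻ ω, f (X ((n : ℝ) + 1) ω - X (n : ℝ) ω) ∂P
              = ∫⁻ x, f x ∂(P.map (fun ω => X ((n : ℝ) + 1) ω - X (n : ℝ) ω)) :=
                (lintegral_map hfm hinc).symm
            _ = ∫⁻ x, f x ∂(P.map (X 1)) := by rw [hmap]
            _ = ∫⁻ ω, f (X 1 ω) ∂P := lintegral_map hfm (hX.meas 1)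
      _ = (∫⁻ ω, f (X 1 ω) ∂P) ^ (n + 1) := by rw [ih, pow_succ]

/-- If `X` is a subordinator which is not a compound Poisson process (equivalently, a
nondegenerate subordinator with `P{X_1 = 0} = 0`), then `E[e^{a T_r}] < ∞` for all `a > 0`,
`r ≥ 0`. -/
theorem stmt5 {Ω : Type*} [MeasurableSpace Ω] (P : Measure Ω) [IsProbabilityMeasure P]
    (X : ℝ → Ω → ℝ) (hX : IsLevy P X)
    (hmono : ∀ ω ⦃s t : ℝ⦄, 0 ≤ s → s ≤ t → X s ω ≤ X t ω)
    (hnotCPP : P {ω | X 1 ω = 0} = 0)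
    (a r : ℝ) (ha : 0 < a) (hr : 0 ≤ r) :
    ∫⁻ ω, eexp a (passageTime X r ω) ∂P < ∞ := by
  classical
  -- nonnegativity of the process
  have hXnn : ∀ (t : ℝ), 0 ≤ t → ∀ ω, 0 ≤ X t ω := by
    intro t ht ω
    have := hmono ω (le_refl (0 : ℝ)) ht
    rwa [hX.init] at this
  -- the Laplace transform at integer points tends to 0
  set ρ : ℝ → ℝ≥0∞ := fun l => ∫⁻ ω, ENNReal.ofReal (Real.exp (-l * X 1 ω)) ∂P with hρdef
  have hX1pos : ∀ᵐ ω ∂P, 0 < X 1 ω := by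
    have hne : ∀ᵐ ω ∂P, X 1 ω ≠ 0 := by
      rw [ae_iff]
      convert hnotCPP using 2
      simp
    filter_upwards [hne] with ω hω
    exact lt_of_le_of_ne (hXnn 1 zero_le_one ω) (Ne.symm hω)
  have htend : Filter.Tendsto (fun k : ℕ => ρ (k : ℝ)) Filter.atTop (nhds 0) := by
    have h0 : (0 : ℝ≥0∞) = ∫⁻ _ : Ω, (0 : ℝ≥0∞) ∂P := by simp
    rw [h0]
    apply tendsto_lintegral_of_dominated_convergence (bound := fun _ => (1 : ℝ≥0∞))
    · intro k
      exact ((Real.continuous_exp.comp ((continuous_const).mul continuous_id)).measurable.ennreal_ofReal).comp (hX.meas 1)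
    · intro k
      filter_upwards with ω
      refine ENNReal.ofReal_le_one.mpr (Real.exp_le_one_iff.mpr ?_)
      have := hXnn 1 zero_le_one ω
      nlinarith [Nat.cast_nonneg (α := ℝ) k]
    · simp
    · filter_upwards [hX1pos] with ω hω
      have h1 : Filter.Tendsto (fun k : ℕ => -(k : ℝ) * X 1 ω) Filter.atTop Filter.atBot := by
        have h1' := Filter.tendsto_neg_atTop_atBot.comp
          ((tendsto_natCast_atTop_atTop (R := ℝ)).atTop_mul_const hω)
        simpa [Function.comp_def, neg_mul] using h1'
      have h2 := (Real.tendsto_exp_atBot).comp h1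
      have h3 := (ENNReal.continuous_ofReal.tendsto 0).comp h2
      simpa [Function.comp_def] using h3
  -- choose a large integer λ
  have hεpos : (0 : ℝ≥0∞) < ENNReal.ofReal (Real.exp (-(a + 1))) :=
    ENNReal.ofReal_pos.mpr (Real.exp_pos _)
  obtain ⟨k, hk⟩ := (htend.eventually_lt_const hεpos).exists
  set lam : ℝ := (k : ℝ) with hlam
  have hlamnn : 0 ≤ lam := Nat.cast_nonneg k
  set ε : ℝ≥0∞ := ENNReal.ofReal (Real.exp (-(a + 1))) with hε
  -- Chernoff bound
  have hSmeas : ∀ n : ℕ, MeasurableSet {ω | X (n : ℝ) ω ≤ r} := fun n =>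
    measurableSet_le (hX.meas _) measurable_const
  have hSn : ∀ n : ℕ, P {ω | X (n : ℝ) ω ≤ r}
      ≤ ENNReal.ofReal (Real.exp (lam * r)) * (ρ lam) ^ n := by
    intro n
    calc P {ω | X (n : ℝ) ω ≤ r}
        = ∫⁻ ω, ({ω | X (n : ℝ) ω ≤ r}).indicator (fun _ => (1 : ℝ≥0∞)) ω ∂P :=
          (lintegral_indicator_one (hSmeas n)).symm
      _ ≤ ∫⁻ ω, ENNReal.ofReal (Real.exp (lam * (r - X (n : ℝ) ω))) ∂P := by
          apply lintegral_mono
          intro ω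
          by_cases h : X (n : ℝ) ω ≤ r
          · rw [Set.indicator_of_mem (show ω ∈ {ω' | X (n : ℝ) ω' ≤ r} from h)]
            refine ENNReal.one_le_ofReal.mpr (Real.one_le_exp ?_)
            nlinarith
          · rw [Set.indicator_of_notMem (show ω ∉ {ω' | X (n : ℝ) ω' ≤ r} from h)]
            exact zero_le
      _ = ∫⁻ ω, ENNReal.ofReal (Real.exp (lam * r))
            * ENNReal.ofReal (Real.exp (-lam * X (n : ℝ) ω)) ∂P := by
          apply lintegral_congr
          intro ω
          rw [← ENNReal.ofReal_mul (Real.exp_nonneg _), ← Real.exp_add]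
          congr 2
          ring
      _ = ENNReal.ofReal (Real.exp (lam * r)) * (ρ lam) ^ n := by
          have hgm : Measurable (fun ω => ENNReal.ofReal (Real.exp (-lam * X (n : ℝ) ω))) :=
            (((hX.meas _).const_mul (-lam)).exp).ennreal_ofReal
          rw [lintegral_const_mul _ hgm, rho_pow_aux hX lam n]
  -- pointwise bound on eexp of the passage time
  have hTle : ∀ ω (n : ℕ), r < X (n : ℝ) ω → passageTime X r ω ≤ ENNReal.ofReal (n : ℝ) :=
    fun ω n h => sInf_le ⟨(n : ℝ), ⟨Nat.cast_nonneg n, h⟩, rfl⟩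
  have key : ∀ ω, eexp a (passageTime X r ω)
      ≤ ENNReal.ofReal (Real.exp a)
        + ∑' n : ℕ, ENNReal.ofReal (Real.exp (a * ((n : ℝ) + 2)))
            * ({ω' | X (n : ℝ) ω' ≤ r}).indicator (fun _ => (1 : ℝ≥0∞)) ω := by
    intro ω
    by_cases hT : passageTime X r ω = ∞
    · have hall : ∀ n : ℕ, X (n : ℝ) ω ≤ r := by
        intro n
        by_contra h
        push_neg at h
        have := hTle ω n h
        rw [hT] at this
        exact (ENNReal.ofReal_ne_top (le_antisymm le_top this)).elim
      have : (∑' n : ℕ, ENNReal.ofReal (Real.exp (a * ((n : ℝ) + 2)))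
          * ({ω' | X (n : ℝ) ω' ≤ r}).indicator (fun _ => (1 : ℝ≥0∞)) ω) = ∞ := by
        refine eq_top_iff.mpr ?_
        calc (⊤ : ℝ≥0∞) = ∑' _ : ℕ, (1 : ℝ≥0∞) :=
              (ENNReal.tsum_const_eq_top_of_ne_zero one_ne_zero).symm
          _ ≤ _ := by
              apply ENNReal.tsum_le_tsum
              intro n
              rw [Set.indicator_of_mem (show ω ∈ {ω' | X (n : ℝ) ω' ≤ r} from hall n), mul_one]
              exact ENNReal.one_le_ofReal.mpr (Real.one_le_exp (mul_nonneg ha.le (by positivity)))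
      rw [this, eexp, if_pos hT]
      simp
    · set u : ℝ := (passageTime X r ω).toReal with hu
      have hunn : 0 ≤ u := ENNReal.toReal_nonneg
      have hufl : u < (⌊u⌋₊ : ℝ) + 1 := Nat.lt_floor_add_one u
      rw [eexp, if_neg hT]
      rcases Nat.eq_zero_or_pos ⌊u⌋₊ with h0 | hpos
      · have hu1 : u < 1 := by rw [h0] at hufl; simpa using hufl
        have : Real.exp (a * u) ≤ Real.exp a := by
          apply Real.exp_le_exp.mpr
          nlinarith
        calc ENNReal.ofReal (Real.exp (a * u)) ≤ ENNReal.ofReal (Real.exp a) :=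
              ENNReal.ofReal_le_ofReal this
          _ ≤ _ := le_self_add
      · obtain ⟨m, hm⟩ := Nat.exists_eq_add_of_lt hpos
        rw [zero_add] at hm
        -- ⌊u⌋₊ = m + 1
        have hXm : X (m : ℝ) ω ≤ r := by
          by_contra h
          push_neg at h
          have h1 := hTle ω m h
          have h2 : u ≤ (m : ℝ) := by
            rw [hu]
            exact ENNReal.toReal_le_of_le_ofReal (Nat.cast_nonneg m) h1
          have h3 : ((m : ℝ) + 1) ≤ u := by
            have := Nat.floor_le hunn
            rw [hm] at this
            push_cast at this
            linarith
          linarith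
        have hexp : Real.exp (a * u) ≤ Real.exp (a * ((m : ℝ) + 2)) := by
          apply Real.exp_le_exp.mpr
          have : u < (m : ℝ) + 2 := by
            rw [hm] at hufl
            push_cast at hufl
            linarith
          nlinarith
        calc ENNReal.ofReal (Real.exp (a * u))
            ≤ ENNReal.ofReal (Real.exp (a * ((m : ℝ) + 2))) := ENNReal.ofReal_le_ofReal hexp
          _ = ENNReal.ofReal (Real.exp (a * ((m : ℝ) + 2)))
              * ({ω' | X (m : ℝ) ω' ≤ r}).indicator (fun _ => (1 : ℝ≥0∞)) ω := by
              rw [Set.indicator_of_mem (show ω ∈ {ω' | X (m : ℝ) ω' ≤ r} from hXm), mul_one]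
          _ ≤ ∑' n : ℕ, ENNReal.ofReal (Real.exp (a * ((n : ℝ) + 2)))
              * ({ω' | X (n : ℝ) ω' ≤ r}).indicator (fun _ => (1 : ℝ≥0∞)) ω :=
              ENNReal.le_tsum m
          _ ≤ _ := le_add_self
  -- put everything together
  have hmeas_ind : ∀ n : ℕ, Measurable (fun ω =>
      ENNReal.ofReal (Real.exp (a * ((n : ℝ) + 2)))
        * ({ω' | X (n : ℝ) ω' ≤ r}).indicator (fun _ => (1 : ℝ≥0∞)) ω) := by
    intro n
    exact measurable_const.mul (measurable_const.indicator (hSmeas n))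
  set C : ℝ≥0∞ := ENNReal.ofReal (Real.exp (2 * a + lam * r)) with hC
  set q : ℝ≥0∞ := ENNReal.ofReal (Real.exp (-1)) with hq
  have hq1 : q < 1 := by
    rw [hq]
    refine ENNReal.ofReal_lt_one.mpr (Real.exp_lt_one_iff.mpr (by norm_num))
  calc ∫⁻ ω, eexp a (passageTime X r ω) ∂P
      ≤ ∫⁻ ω, (ENNReal.ofReal (Real.exp a)
        + ∑' n : ℕ, ENNReal.ofReal (Real.exp (a * ((n : ℝ) + 2)))
            * ({ω' | X (n : ℝ) ω' ≤ r}).indicator (fun _ => (1 : ℝ≥0∞)) ω) ∂P :=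
        lintegral_mono key
    _ = ENNReal.ofReal (Real.exp a)
        + ∑' n : ℕ, ENNReal.ofReal (Real.exp (a * ((n : ℝ) + 2)))
            * P {ω' | X (n : ℝ) ω' ≤ r} := by
        rw [lintegral_add_left measurable_const, lintegral_const, measure_univ, mul_one,
          lintegral_tsum (fun n => (hmeas_ind n).aemeasurable)]
        congr 1
        refine tsum_congr fun n => ?_
        rw [lintegral_const_mul _ (measurable_const.indicator (hSmeas n))]
        congr 1
        exact lintegral_indicator_one (hSmeas n)
    _ ≤ ENNReal.ofReal (Real.exp a)
        + ∑' n : ℕ, ENNReal.ofReal (Real.exp (a * ((n : ℝ) + 2)))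
            * (ENNReal.ofReal (Real.exp (lam * r)) * ε ^ n) := by
        gcongr with n
        exact (hSn n).trans (by gcongr)
    _ = ENNReal.ofReal (Real.exp a) + ∑' n : ℕ, C * q ^ n := by
        congr 1
        apply tsum_congr
        intro n
        rw [hε, hC, hq]
        simp only [← ENNReal.ofReal_pow (Real.exp_nonneg _), ← Real.exp_nat_mul,
          ← ENNReal.ofReal_mul (Real.exp_nonneg _), ← Real.exp_add, Real.exp_nonneg]
        congr 1
        ring
    _ = ENNReal.ofReal (Real.exp a) + C * (1 - q)⁻¹ := by
        rw [ENNReal.tsum_mul_left, ENNReal.tsum_geometric]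
    _ < ∞ := by
        apply ENNReal.add_lt_top.mpr
        constructor
        · exact ENNReal.ofReal_lt_top
        · exact ENNReal.mul_lt_top ENNReal.ofReal_lt_top
            (ENNReal.inv_lt_top.mpr (tsub_pos_of_lt hq1))
end

section
/- Let X be a Lévy process and fix a > 0, r ∈ ℝ. For n ∈ ℕ let I_n = inf_{n−1≤t≤n}(X_t − X_{n−1}) and S_n = sup_{n−1≤t≤n}(X_t − X_{n−1}). Then (1/2)·E[V_a^1(r − S_1)] ≤ ∫_1^∞ e^{at} t^{−1} P{X_t ≤ r} dt ≤ e^a·E[V_a^1(r − I_1)], where V_a^1(x) = Σ_{n≥1} e^{an} n^{−1} P{X_n ≤ x}. -/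
set_option linter.unusedSectionVars false
set_option linter.unusedVariables false
set_option maxHeartbeats 1000000

open MeasureTheory ProbabilityTheory Set
open scoped ENNReal
open Filter
open scoped Topology

/-- A càdlàg function is bounded on compact intervals. -/
lemma bdd_of_cadlag (f : ℝ → ℝ) (rc : ∀ t : ℝ, ContinuousWithinAt f (Set.Ici t) t)
    (ll : ∀ t : ℝ, ∃ l : ℝ, Tendsto f (𝓝[<] t) (𝓝 l)) (a b : ℝ) :
    Bornology.IsBounded (f '' Set.Icc a b) := by
  have key : ∀ x ∈ Icc a b, ∃ U ∈ 𝓝 x, Bornology.IsBounded (f '' U) := by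
    intro x _
    obtain ⟨l, hl⟩ := ll x
    have h1 : ∀ᶠ s in 𝓝[<] x, f s ∈ Metric.ball l 1 := hl (Metric.ball_mem_nhds l one_pos)
    have h2 : ∀ᶠ s in 𝓝[Set.Ici x] x, f s ∈ Metric.ball (f x) 1 :=
      (rc x).tendsto (Metric.ball_mem_nhds (f x) one_pos)
    obtain ⟨u, hu, hu'⟩ := (nhdsLT_basis_of_exists_lt ⟨x - 1, by linarith⟩).eventually_iff.mp h1
    obtain ⟨v, hv, hv'⟩ := (nhdsGE_basis_Ico x).eventually_iff.mp h2
    refine ⟨Set.Ioo u v, Ioo_mem_nhds hu hv, ?_⟩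
    have : f '' Set.Ioo u v ⊆ Metric.ball l 1 ∪ Metric.ball (f x) 1 := by
      rintro - ⟨s, hs, rfl⟩
      rcases lt_or_ge s x with h | h
      · exact Or.inl (hu' ⟨hs.1, h⟩)
      · exact Or.inr (hv' ⟨h, hs.2⟩)
    exact (Metric.isBounded_ball.union Metric.isBounded_ball).subset this
  choose! U hU hUb using key
  obtain ⟨t, ht⟩ := isCompact_Icc.elim_nhds_subcover' (fun x hx => U x) (fun x hx => hU x hx)
  have : f '' Set.Icc a b ⊆ ⋃ x ∈ t, f '' U x := by
    intro y hy
    obtain ⟨s, hs, rfl⟩ := hy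
    obtain ⟨x, hx⟩ := Set.mem_iUnion₂.mp (ht hs)
    exact Set.mem_iUnion₂.mpr ⟨x, hx.1, Set.mem_image_of_mem f hx.2⟩
  refine ((Bornology.isBounded_biUnion t.finite_toSet).2 ?_).subset this
  intro x hx
  exact hUb x x.2

lemma dyadic_approx (u t : ℝ) (h0 : u ≤ t) (h1 : t < u + 1) :
    ∃ s : ℕ → ℝ, Tendsto s atTop (𝓝[Set.Ici t] t) ∧
      ∀ j : ℕ, ∃ i ∈ Finset.range (2 ^ j + 1), s j = u + i / 2 ^ j := by
  set x := t - u with hx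
  have hx0 : 0 ≤ x := by linarith
  have hx1 : x < 1 := by linarith
  refine ⟨fun j => u + (⌊x * 2 ^ j⌋₊ + 1) / 2 ^ j, ?_, ?_⟩
  · have h2j : ∀ j : ℕ, (0:ℝ) < 2 ^ j := fun j => by positivity
    have hgt : ∀ j, t ≤ u + (⌊x * 2 ^ j⌋₊ + 1) / 2 ^ j := by
      intro j
      have := Nat.lt_floor_add_one (x * 2 ^ j)
      have : x ≤ (⌊x * 2 ^ j⌋₊ + 1) / 2 ^ j := by
        rw [le_div_iff₀ (h2j j)]; push_cast at this ⊢; linarith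
      linarith
    have hle : ∀ j, u + (⌊x * 2 ^ j⌋₊ + 1) / 2 ^ j ≤ t + (2 ^ j : ℝ)⁻¹ := by
      intro j
      have hfl : (⌊x * 2 ^ j⌋₊ : ℝ) ≤ x * 2 ^ j := Nat.floor_le (by positivity)
      have : ((⌊x * 2 ^ j⌋₊ : ℝ) + 1) / 2 ^ j ≤ x + (2 ^ j : ℝ)⁻¹ := by
        rw [div_le_iff₀ (h2j j), add_mul, inv_mul_cancel₀ (h2j j).ne']
        linarith
      linarith
    have htend : Tendsto (fun j : ℕ => t + ((2:ℝ) ^ j)⁻¹) atTop (𝓝 t) := by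
      have : Tendsto (fun j : ℕ => ((2:ℝ) ^ j)⁻¹) atTop (𝓝 0) :=
        tendsto_inv_atTop_zero.comp (tendsto_pow_atTop_atTop_of_one_lt one_lt_two)
      simpa using tendsto_const_nhds.add this
    have h' : Tendsto (fun j => u + (⌊x * 2 ^ j⌋₊ + 1) / 2 ^ j) atTop (𝓝 t) :=
      tendsto_of_tendsto_of_tendsto_of_le_of_le tendsto_const_nhds htend hgt hle
    exact tendsto_nhdsWithin_of_tendsto_nhds_of_eventually_within _ h'
      (Eventually.of_forall fun j => hgt j)
  · intro j
    refine ⟨⌊x * 2 ^ j⌋₊ + 1, ?_, by push_cast; ring⟩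
    rw [Finset.mem_range]
    have : ⌊x * 2 ^ j⌋₊ < 2 ^ j := by
      rw [Nat.floor_lt (by positivity)]
      push_cast
      nlinarith [pow_pos (show (0:ℝ) < 2 by norm_num) j]
    omega

lemma mem_Icc_dyadic {u : ℝ} {K i : ℕ} (hi : i ∈ Finset.range (2 ^ K + 1)) :
    u + i / 2 ^ K ∈ Set.Icc u (u + 1) := by
  rw [Finset.mem_range] at hi
  have h2 : (0:ℝ) < 2 ^ K := by positivity
  constructor
  · have : (0:ℝ) ≤ i / 2 ^ K := by positivity
    linarith
  · have : (i:ℝ) ≤ 2 ^ K := by exact_mod_cast Nat.lt_succ_iff.mp hi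
    have : (i:ℝ) / 2 ^ K ≤ 1 := by rw [div_le_one h2]; exact this
    linarith

lemma csSup_le_iff_dyadic (f : ℝ → ℝ) (rc : ∀ t : ℝ, ContinuousWithinAt f (Set.Ici t) t)
    (u b : ℝ) (hbdd : BddAbove (f '' Set.Icc u (u + 1))) :
    sSup (f '' Set.Icc u (u + 1)) ≤ b ↔
      ∀ K : ℕ, ∀ i ∈ Finset.range (2 ^ K + 1), f (u + i / 2 ^ K) ≤ b := by
  constructor
  · intro h K i hi
    exact le_trans (le_csSup hbdd (Set.mem_image_of_mem f (mem_Icc_dyadic hi))) h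
  · intro h
    refine csSup_le ⟨f u, Set.mem_image_of_mem f ⟨le_refl u, by linarith⟩⟩ ?_
    rintro - ⟨t, ht, rfl⟩
    rcases eq_or_lt_of_le ht.2 with heq | hlt
    · have := h 0 1 (by norm_num)
      norm_num at this
      rwa [heq]
    · obtain ⟨s, hs, hsi⟩ := dyadic_approx u t ht.1 hlt
      have hconv : Tendsto (fun j => f (s j)) atTop (𝓝 (f t)) := (rc t).tendsto.comp hs
      refine le_of_tendsto hconv (Eventually.of_forall fun j => ?_)
      obtain ⟨i, hi, hsj⟩ := hsi j
      rw [hsj]; exact h j i hi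

lemma csInf_lt_iff_dyadic (f : ℝ → ℝ) (rc : ∀ t : ℝ, ContinuousWithinAt f (Set.Ici t) t)
    (u b : ℝ) (hbdd : BddBelow (f '' Set.Icc u (u + 1))) :
    sInf (f '' Set.Icc u (u + 1)) < b ↔
      ∃ K : ℕ, ∃ i ∈ Finset.range (2 ^ K + 1), f (u + i / 2 ^ K) < b := by
  have hne : (f '' Set.Icc u (u + 1)).Nonempty :=
    ⟨f u, Set.mem_image_of_mem f (by constructor <;> linarith)⟩
  rw [csInf_lt_iff hbdd hne]
  constructor
  · rintro ⟨-, ⟨t, ht, rfl⟩, hlt⟩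
    rcases eq_or_lt_of_le ht.2 with heq | hlt2
    · exact ⟨0, 1, by norm_num, by norm_num; rwa [← heq]⟩
    · obtain ⟨s, hs, hsi⟩ := dyadic_approx u t ht.1 hlt2
      have hconv : Tendsto (fun j => f (s j)) atTop (𝓝 (f t)) := (rc t).tendsto.comp hs
      obtain ⟨j, hj⟩ := (hconv.eventually_lt_const hlt).exists
      obtain ⟨i, hi, hsj⟩ := hsi j
      exact ⟨j, i, hi, by rwa [← hsj]⟩
  · rintro ⟨K, i, hi, hlt⟩
    exact ⟨f (u + i / 2 ^ K), Set.mem_image_of_mem f (mem_Icc_dyadic hi), hlt⟩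

/-- The vector of consecutive dyadic increments of `X` over `[N, N+1]` at level `K`. -/
noncomputable def incvec {Ω : Type*} (X : ℝ → Ω → ℝ) (N : ℝ) (K : ℕ) : Ω → (Fin (2 ^ K) → ℝ) :=
  fun ω j => X (N + ((j : ℕ) + 1) / 2 ^ K) ω - X (N + (j : ℕ) / 2 ^ K) ω

section levy
variable {Ω : Type*} [MeasurableSpace Ω] {P : Measure Ω} [IsProbabilityMeasure P]
  {X : ℝ → Ω → ℝ} (hX : IsLevy P X)

include hX

lemma incvec_measurable (N : ℝ) (K : ℕ) : Measurable (incvec X N K) :=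
  measurable_pi_lambda _ fun j => (hX.meas _).sub (hX.meas _)

lemma incvec_coord_measurable (N : ℝ) (K : ℕ) (j : Fin (2 ^ K)) :
    Measurable fun ω => incvec X N K ω j := (hX.meas _).sub (hX.meas _)

/-- one-dimensional stationarity for dyadic increments -/
lemma map_inc_eq (N : ℝ) (hN : 0 ≤ N) (K k : ℕ) :
    P.map (fun ω => X (N + (k + 1) / 2 ^ K) ω - X (N + k / 2 ^ K) ω)
      = P.map (X ((1 : ℝ) / 2 ^ K)) := by
  have h1 : (0:ℝ) ≤ N + k / 2 ^ K := by positivity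
  have h2 : N + (k:ℝ) / 2 ^ K ≤ N + (k + 1) / 2 ^ K := by
    have : (k:ℝ) / 2 ^ K ≤ (k + 1) / 2 ^ K := by
      apply div_le_div_of_nonneg_right ?_ (by positivity)
      · linarith
    linarith
  rw [hX.stationary _ _ h1 h2]
  congr 1
  ring

lemma incvec_iIndep (N : ℝ) (hN : 0 ≤ N) (K : ℕ) :
    iIndepFun
      (fun j ω => incvec X N K ω j) P := by
  have hmono : Monotone (fun j : ℕ => N + ((min j (2 ^ K) : ℕ) : ℝ) / 2 ^ K) := by
    intro i j hij
    dsimp only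
    gcongr <;> first
      | exact_mod_cast min_le_min hij le_rfl
      | skip
  have h0 : (0:ℝ) ≤ N + ((min 0 (2 ^ K) : ℕ) : ℝ) / 2 ^ K := by simp [hN]
  have h := hX.indepIncr (2 ^ K) (fun j : ℕ => N + ((min j (2 ^ K) : ℕ) : ℝ) / 2 ^ K) hmono h0
  convert h using 1
  funext j
  have hj1 : min ((j : ℕ) + 1) (2 ^ K) = (j : ℕ) + 1 := Nat.min_eq_left j.2
  have hj0 : min (j : ℕ) (2 ^ K) = (j : ℕ) := Nat.min_eq_left (le_of_lt j.2)
  funext ω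
  simp only [incvec, hj1, hj0]
  push_cast
  ring_nf

lemma map_incvec_eq (N : ℝ) (hN : 0 ≤ N) (K : ℕ) :
    P.map (incvec X N K) = P.map (incvec X 0 K) := by
  have hias : ∀ (M : ℝ), 0 ≤ M → ∀ B : Fin (2 ^ K) → Set ℝ, (∀ j, MeasurableSet (B j)) →
      P.map (incvec X M K) (Set.pi Set.univ B) = ∏ j, (P.map (X ((1:ℝ)/2^K))) (B j) := by
    intro M hM B hB
    rw [Measure.map_apply (incvec_measurable hX M K) (MeasurableSet.univ_pi hB)]
    have : incvec X M K ⁻¹' Set.pi Set.univ B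
        = ⋂ j ∈ Finset.univ, (fun ω => incvec X M K ω j) ⁻¹' B j := by
      ext ω; simp [Set.mem_pi, incvec]
    rw [this, (incvec_iIndep hX M hM K).measure_inter_preimage_eq_mul Finset.univ
      (fun j _ => hB j)]
    refine Finset.prod_congr rfl fun j _ => ?_
    rw [← Measure.map_apply (incvec_coord_measurable hX M K j) (hB j)]
    exact congrFun (congrArg _ (map_inc_eq hX M hM K j)) _
  have h1 : IsProbabilityMeasure (P.map (incvec X N K)) :=
    Measure.isProbabilityMeasure_map (incvec_measurable hX N K).aemeasurable
  have h2 : IsProbabilityMeasure (P.map (incvec X 0 K)) :=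
    Measure.isProbabilityMeasure_map (incvec_measurable hX 0 K).aemeasurable
  refine ext_of_generate_finite _ generateFrom_pi.symm isPiSystem_pi ?_ (by simp)
  rintro - ⟨B, hB, rfl⟩
  rw [hias N hN B (fun j => hB j (Set.mem_univ j)), hias 0 le_rfl B (fun j => hB j (Set.mem_univ j))]

lemma indep_X_incvec (N : ℝ) (hN : 0 ≤ N) (K : ℕ) :
    IndepFun (X N) (incvec X N K) P := by
  set t : ℕ → ℝ := fun j => N * ((min j 1 : ℕ) : ℝ) + ((min (j - 1) (2 ^ K) : ℕ) : ℝ) / 2 ^ K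
    with ht
  have hmono : Monotone t := by
    intro i j hij
    simp only [ht]
    gcongr <;> first
      | exact_mod_cast min_le_min hij le_rfl
      | exact_mod_cast min_le_min (Nat.sub_le_sub_right hij 1) le_rfl
      | skip
  have h0 : 0 ≤ t 0 := by simp [ht]
  have hInd := hX.indepIncr (2 ^ K + 1) t hmono h0
  set W : Fin (2 ^ K + 1) → Ω → ℝ := fun i ω => X (t ((i : ℕ) + 1)) ω - X (t (i : ℕ)) ω with hW
  have hWmeas : ∀ i, Measurable (W i) := fun i => (hX.meas _).sub (hX.meas _)
  have hdisj : Disjoint ({0} : Finset (Fin (2 ^ K + 1))) (Finset.univ \ {0}) :=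
    Finset.disjoint_sdiff
  have hIF := hInd.indepFun_finset {0} (Finset.univ \ {0}) hdisj hWmeas
  -- compose with coordinate extraction maps
  set φ : ({ x // x ∈ ({0} : Finset (Fin (2 ^ K + 1))) } → ℝ) → ℝ :=
    fun v => v ⟨0, Finset.mem_singleton_self 0⟩ with hφ
  have hφm : Measurable φ := measurable_pi_apply _
  set T : Finset (Fin (2 ^ K + 1)) := Finset.univ \ {0} with hT
  have hmemT : ∀ j : Fin (2 ^ K), (⟨(j : ℕ) + 1, by omega⟩ : Fin (2 ^ K + 1)) ∈ T := by
    intro j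
    rw [hT, Finset.mem_sdiff, Finset.mem_singleton]
    refine ⟨Finset.mem_univ _, fun h => ?_⟩
    have := congrArg Fin.val h
    change (j:ℕ) + 1 = ((0 : Fin (2 ^ K + 1)) : ℕ) at this
    rw [Fin.val_zero] at this
    omega
  set ψ : ({ x // x ∈ T } → ℝ) → (Fin (2 ^ K) → ℝ) :=
    fun v j => v ⟨⟨(j : ℕ) + 1, by omega⟩, hmemT j⟩ with hψ
  have hψm : Measurable ψ := measurable_pi_lambda _ fun j => measurable_pi_apply _
  have hcomp := hIF.comp hφm hψm
  have e1 : φ ∘ (fun a (i : ({0} : Finset (Fin (2 ^ K + 1)))) => W i a) = X N := by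
    funext ω
    simp only [hφ, Function.comp_apply, hW]
    have ht1 : t 1 = N := by simp [ht]
    have ht0 : t 0 = 0 := by simp [ht]
    simp [ht1, ht0, hX.init ω]
  have e2 : ψ ∘ (fun a (i : T) => W i a) = incvec X N K := by
    funext ω
    funext j
    simp only [hψ, Function.comp_apply, hW, incvec]
    have hj1 : min ((j : ℕ) + 1 - 1) (2 ^ K) = (j : ℕ) := by
      simp [Nat.min_eq_left (le_of_lt j.2)]
    have hj2 : min ((j : ℕ) + 1 + 1 - 1) (2 ^ K) = (j : ℕ) + 1 := by
      simp [Nat.min_eq_left j.2]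
    simp only [ht, hj1, hj2]
    have hm1 : min ((j:ℕ) + 1) 1 = 1 := by omega
    have hm2 : min ((j:ℕ) + 1 + 1) 1 = 1 := by omega
    rw [hm1, hm2]
    push_cast
    ring_nf
  rw [e1, e2] at hcomp
  exact hcomp


omit hX

/-- partial sums of an increment vector -/
def psum {K : ℕ} (v : Fin (2 ^ K) → ℝ) (i : ℕ) : ℝ :=
  ∑ j ∈ Finset.range i, if h : j < 2 ^ K then v ⟨j, h⟩ else 0

lemma psum_measurable {K : ℕ} (i : ℕ) : Measurable fun v : Fin (2 ^ K) → ℝ => psum v i := by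
  apply Finset.measurable_sum
  intro j _
  by_cases h : j < 2 ^ K
  · simp only [psum, h, dif_pos]
    exact measurable_pi_apply _
  · simp only [psum, h, dif_neg, not_false_iff]
    exact measurable_const

/-- the CE sets: all dyadic partial sums at level K are at most `b` -/
def CE (K : ℕ) (b : ℝ) : Set (Fin (2 ^ K) → ℝ) :=
  {v | ∀ i ∈ Finset.range (2 ^ K + 1), psum v i ≤ b}

def CF (K : ℕ) (b : ℝ) : Set (Fin (2 ^ K) → ℝ) :=
  {v | ∃ i ∈ Finset.range (2 ^ K + 1), psum v i < b}

lemma CE_measurable (K : ℕ) (b : ℝ) : MeasurableSet (CE K b) := by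
  have : CE K b = ⋂ i ∈ Finset.range (2 ^ K + 1), {v : Fin (2 ^ K) → ℝ | psum v i ≤ b} := by
    ext v; simp [CE]
  rw [this]
  exact MeasurableSet.biInter (Finset.range (2 ^ K + 1)).countable_toSet
    fun i _ => measurableSet_le (psum_measurable i) measurable_const

lemma CF_measurable (K : ℕ) (b : ℝ) : MeasurableSet (CF K b) := by
  have : CF K b = ⋃ i ∈ Finset.range (2 ^ K + 1), {v : Fin (2 ^ K) → ℝ | psum v i < b} := by
    ext v; simp [CF]
  rw [this]
  exact MeasurableSet.biUnion (Finset.range (2 ^ K + 1)).countable_toSet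
    fun i _ => measurableSet_lt (psum_measurable i) measurable_const

lemma psum_incvec {X : ℝ → Ω → ℝ} (N : ℝ) (K : ℕ) (ω : Ω) {i : ℕ} (hi : i ≤ 2 ^ K) :
    psum (incvec X N K ω) i = X (N + i / 2 ^ K) ω - X N ω := by
  have : psum (incvec X N K ω) i
      = ∑ j ∈ Finset.range i, (X (N + ((j:ℕ)+1) / 2 ^ K) ω - X (N + (j:ℕ) / 2 ^ K) ω) := by
    apply Finset.sum_congr rfl
    intro j hj
    have hj' : j < 2 ^ K := lt_of_lt_of_le (Finset.mem_range.mp hj) hi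
    simp [psum, hj', incvec]
  rw [this]
  have := Finset.sum_range_sub (fun k : ℕ => X (N + k / 2 ^ K) ω) i
  push_cast at this ⊢
  rw [this]
  norm_num

include hX

/-- a path increment is càdlàg, hence bounded on compacts -/
lemma incr_bddAbove (ω : Ω) (c a b : ℝ) :
    BddAbove ((fun t => X t ω - c) '' Set.Icc a b) := by
  have hb := bdd_of_cadlag (fun t => X t ω - c)
    (fun t => (hX.rightCont ω t).sub continuousWithinAt_const)
    (fun t => by
      obtain ⟨l, hl⟩ := hX.leftLim ω t
      exact ⟨l - c, hl.sub_const c⟩) a b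
  exact hb.bddAbove

lemma incr_bddBelow (ω : Ω) (c a b : ℝ) :
    BddBelow ((fun t => X t ω - c) '' Set.Icc a b) := by
  have hb := bdd_of_cadlag (fun t => X t ω - c)
    (fun t => (hX.rightCont ω t).sub continuousWithinAt_const)
    (fun t => by
      obtain ⟨l, hl⟩ := hX.leftLim ω t
      exact ⟨l - c, hl.sub_const c⟩) a b
  exact hb.bddBelow

lemma setOf_Dsup_le (N b : ℝ) :
    {ω | sSup ((fun t => X t ω - X N ω) '' Set.Icc N (N + 1)) ≤ b}
      = ⋂ K : ℕ, incvec X N K ⁻¹' CE K b := by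
  ext ω
  rw [Set.mem_setOf_eq, csSup_le_iff_dyadic (fun t => X t ω - X N ω)
    (fun t => (hX.rightCont ω t).sub continuousWithinAt_const) N b
    (incr_bddAbove hX ω (X N ω) N (N + 1))]
  simp only [Set.mem_iInter, Set.mem_preimage, CE, Set.mem_setOf_eq]
  constructor
  · intro h K i hi
    rw [psum_incvec N K ω (Nat.lt_succ_iff.mp (Finset.mem_range.mp hi))]
    exact h K i hi
  · intro h K i hi
    have := h K i hi
    rwa [psum_incvec N K ω (Nat.lt_succ_iff.mp (Finset.mem_range.mp hi))] at this

lemma setOf_Dinf_lt (N b : ℝ) :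
    {ω | sInf ((fun t => X t ω - X N ω) '' Set.Icc N (N + 1)) < b}
      = ⋃ K : ℕ, incvec X N K ⁻¹' CF K b := by
  ext ω
  rw [Set.mem_setOf_eq, csInf_lt_iff_dyadic (fun t => X t ω - X N ω)
    (fun t => (hX.rightCont ω t).sub continuousWithinAt_const) N b
    (incr_bddBelow hX ω (X N ω) N (N + 1))]
  simp only [Set.mem_iUnion, Set.mem_preimage, CF, Set.mem_setOf_eq]
  constructor
  · rintro ⟨K, i, hi, h⟩
    refine ⟨K, i, hi, ?_⟩
    rwa [psum_incvec N K ω (Nat.lt_succ_iff.mp (Finset.mem_range.mp hi))]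
  · rintro ⟨K, i, hi, h⟩
    refine ⟨K, i, hi, ?_⟩
    rwa [psum_incvec N K ω (Nat.lt_succ_iff.mp (Finset.mem_range.mp hi))] at h

lemma antitone_CE_preimage (N b : ℝ) :
    Antitone fun K : ℕ => incvec X N K ⁻¹' CE K b := by
  apply antitone_nat_of_succ_le
  intro K ω hω
  simp only [Set.mem_preimage, CE, Set.mem_setOf_eq] at hω ⊢
  intro i hi
  have hi' : i ≤ 2 ^ K := Nat.lt_succ_iff.mp (Finset.mem_range.mp hi)
  rw [psum_incvec N K ω hi']
  have h2i : 2 * i ≤ 2 ^ (K + 1) := by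
    rw [pow_succ]; omega
  have := hω (2 * i) (Finset.mem_range.mpr (by omega))
  rw [psum_incvec N (K + 1) ω h2i] at this
  have harg : N + (2 * i : ℕ) / (2:ℝ) ^ (K + 1) = N + (i : ℝ) / 2 ^ K := by
    push_cast
    rw [pow_succ]
    field_simp
  rwa [harg] at this

lemma monotone_CF_preimage (N b : ℝ) :
    Monotone fun K : ℕ => incvec X N K ⁻¹' CF K b := by
  apply monotone_nat_of_le_succ
  intro K ω hω
  simp only [Set.mem_preimage, CF, Set.mem_setOf_eq] at hω ⊢
  obtain ⟨i, hi, h⟩ := hω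
  have hi' : i ≤ 2 ^ K := Nat.lt_succ_iff.mp (Finset.mem_range.mp hi)
  rw [psum_incvec N K ω hi'] at h
  have h2i : 2 * i ≤ 2 ^ (K + 1) := by rw [pow_succ]; omega
  refine ⟨2 * i, Finset.mem_range.mpr (by omega), ?_⟩
  rw [psum_incvec N (K + 1) ω h2i]
  have harg : N + (2 * i : ℕ) / (2:ℝ) ^ (K + 1) = N + (i : ℝ) / 2 ^ K := by
    push_cast
    rw [pow_succ]
    field_simp
  rwa [harg]

lemma measurable_Dsup (N : ℝ) :
    Measurable fun ω => sSup ((fun t => X t ω - X N ω) '' Set.Icc N (N + 1)) := by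
  apply measurable_of_Iic
  intro b
  have : (fun ω => sSup ((fun t => X t ω - X N ω) '' Set.Icc N (N + 1))) ⁻¹' Set.Iic b
      = {ω | sSup ((fun t => X t ω - X N ω) '' Set.Icc N (N + 1)) ≤ b} := rfl
  rw [this, setOf_Dsup_le hX N b]
  exact MeasurableSet.iInter fun K => (incvec_measurable hX N K) (CE_measurable K b)

lemma measurable_Dinf (N : ℝ) :
    Measurable fun ω => sInf ((fun t => X t ω - X N ω) '' Set.Icc N (N + 1)) := by
  apply measurable_of_Iio
  intro b
  have : (fun ω => sInf ((fun t => X t ω - X N ω) '' Set.Icc N (N + 1))) ⁻¹' Set.Iio b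
      = {ω | sInf ((fun t => X t ω - X N ω) '' Set.Icc N (N + 1)) < b} := rfl
  rw [this, setOf_Dinf_lt hX N b]
  exact MeasurableSet.iUnion fun K => (incvec_measurable hX N K) (CF_measurable K b)

lemma FD (N : ℝ) (hN : 0 ≤ N) (K : ℕ) {B : Set ℝ} (hB : MeasurableSet B)
    {C : Set (Fin (2 ^ K) → ℝ)} (hC : MeasurableSet C) :
    P (X N ⁻¹' B ∩ incvec X N K ⁻¹' C) = P (X N ⁻¹' B) * P (incvec X 0 K ⁻¹' C) := by
  rw [(indep_X_incvec hX N hN K).measure_inter_preimage_eq_mul B C hB hC]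
  congr 1
  rw [← Measure.map_apply (incvec_measurable hX N K) hC, map_incvec_eq hX N hN K,
    Measure.map_apply (incvec_measurable hX 0 K) hC]

omit hX
lemma gen_Iic : MeasurableSpace.generateFrom (Set.range (Set.Iic : ℝ → Set ℝ))
    = (inferInstance : MeasurableSpace ℝ) :=
  (borel_eq_generateFrom_Iic ℝ).symm.trans BorelSpace.measurable_eq.symm

lemma gen_Iio : MeasurableSpace.generateFrom (Set.range (Set.Iio : ℝ → Set ℝ))
    = (inferInstance : MeasurableSpace ℝ) :=
  (borel_eq_generateFrom_Iio ℝ).symm.trans BorelSpace.measurable_eq.symm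

lemma span_Iic : IsCountablySpanning (Set.range (Set.Iic : ℝ → Set ℝ)) := by
  refine ⟨fun n => Set.Iic (n : ℝ), fun n => ⟨n, rfl⟩, ?_⟩
  ext x
  simpa using exists_nat_ge x

lemma span_Iio : IsCountablySpanning (Set.range (Set.Iio : ℝ → Set ℝ)) := by
  refine ⟨fun n => Set.Iio (n : ℝ), fun n => ⟨n, rfl⟩, ?_⟩
  ext x
  simpa using exists_nat_gt x

lemma pi_Iic : IsPiSystem (Set.range (Set.Iic : ℝ → Set ℝ)) := by
  rintro - ⟨a, rfl⟩ - ⟨b, rfl⟩ -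
  exact ⟨a ⊓ b, Set.Iic_inter_Iic.symm⟩

lemma pi_Iio : IsPiSystem (Set.range (Set.Iio : ℝ → Set ℝ)) := by
  rintro - ⟨a, rfl⟩ - ⟨b, rfl⟩ -
  exact ⟨a ⊓ b, Set.Iio_inter_Iio.symm⟩
include hX

lemma PL_sup (N : ℝ) (hN : 0 ≤ N) :
    P.map (fun ω => (X N ω, sSup ((fun t => X t ω - X N ω) '' Set.Icc N (N + 1))))
      = (P.map (X N)).prod
        (P.map (fun ω => sSup ((fun t => X t ω - X 0 ω) '' Set.Icc 0 (0 + 1)))) := by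
  have hpairm : Measurable fun ω => (X N ω, sSup ((fun t => X t ω - X N ω) '' Set.Icc N (N + 1))) :=
    (hX.meas N).prodMk (measurable_Dsup hX N)
  have h1 : IsProbabilityMeasure (P.map
      (fun ω => (X N ω, sSup ((fun t => X t ω - X N ω) '' Set.Icc N (N + 1))))) :=
    Measure.isProbabilityMeasure_map hpairm.aemeasurable
  have h2 : IsProbabilityMeasure (P.map (X N)) :=
    Measure.isProbabilityMeasure_map (hX.meas N).aemeasurable
  have h3 : IsProbabilityMeasure
      (P.map (fun ω => sSup ((fun t => X t ω - X 0 ω) '' Set.Icc 0 (0 + 1)))) :=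
    Measure.isProbabilityMeasure_map (measurable_Dsup hX 0).aemeasurable
  refine ext_of_generate_finite _
    (generateFrom_eq_prod gen_Iic gen_Iic span_Iic span_Iic).symm
    (pi_Iic.prod pi_Iic) ?_ (by rw [measure_univ, measure_univ])
  rintro - ⟨-, ⟨a, rfl⟩, -, ⟨b, rfl⟩, rfl⟩
  rw [Measure.map_apply hpairm (measurableSet_Iic.prod measurableSet_Iic),
    Measure.prod_prod, Measure.map_apply (hX.meas N) measurableSet_Iic,
    Measure.map_apply (measurable_Dsup hX 0) measurableSet_Iic,
    Set.mk_preimage_prod]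
  have hIicD : ∀ M : ℝ, (fun ω => sSup ((fun t => X t ω - X M ω) '' Set.Icc M (M + 1))) ⁻¹'
      Set.Iic b = {ω | sSup ((fun t => X t ω - X M ω) '' Set.Icc M (M + 1)) ≤ b} := fun M => rfl
  rw [hIicD, setOf_Dsup_le hX N b, Set.inter_iInter]
  have hmeasK : ∀ K : ℕ, NullMeasurableSet
      (X N ⁻¹' Set.Iic a ∩ incvec X N K ⁻¹' CE K b) P :=
    fun K => (((hX.meas N) measurableSet_Iic).inter
      ((incvec_measurable hX N K) (CE_measurable K b))).nullMeasurableSet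
  have hanti : Antitone fun K : ℕ => X N ⁻¹' Set.Iic a ∩ incvec X N K ⁻¹' CE K b :=
    fun K L h => Set.inter_subset_inter le_rfl (antitone_CE_preimage hX N b h)
  rw [Directed.measure_iInter hmeasK hanti.directed_ge ⟨0, measure_ne_top _ _⟩]
  have hterm : ∀ K : ℕ, P (X N ⁻¹' Set.Iic a ∩ incvec X N K ⁻¹' CE K b)
      = P (X N ⁻¹' Set.Iic a) * P (incvec X 0 K ⁻¹' CE K b) :=
    fun K => FD hX N hN K measurableSet_Iic (CE_measurable K b)
  rw [iInf_congr hterm, ← ENNReal.mul_iInf' (by simp [measure_ne_top]) (fun _ => inferInstance)]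
  congr 1
  have hmeasK0 : ∀ K : ℕ, NullMeasurableSet (incvec X 0 K ⁻¹' CE K b) P :=
    fun K => ((incvec_measurable hX 0 K) (CE_measurable K b)).nullMeasurableSet
  have hanti0 : Antitone fun K : ℕ => incvec X 0 K ⁻¹' CE K b := antitone_CE_preimage hX 0 b
  rw [← Directed.measure_iInter hmeasK0 hanti0.directed_ge ⟨0, measure_ne_top _ _⟩,
    ← setOf_Dsup_le hX 0 b]
  rfl

lemma PL_inf (N : ℝ) (hN : 0 ≤ N) :
    P.map (fun ω => (X N ω, sInf ((fun t => X t ω - X N ω) '' Set.Icc N (N + 1))))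
      = (P.map (X N)).prod
        (P.map (fun ω => sInf ((fun t => X t ω - X 0 ω) '' Set.Icc 0 (0 + 1)))) := by
  have hpairm : Measurable fun ω => (X N ω, sInf ((fun t => X t ω - X N ω) '' Set.Icc N (N + 1))) :=
    (hX.meas N).prodMk (measurable_Dinf hX N)
  have h1 : IsProbabilityMeasure (P.map
      (fun ω => (X N ω, sInf ((fun t => X t ω - X N ω) '' Set.Icc N (N + 1))))) :=
    Measure.isProbabilityMeasure_map hpairm.aemeasurable
  have h2 : IsProbabilityMeasure (P.map (X N)) :=
    Measure.isProbabilityMeasure_map (hX.meas N).aemeasurable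
  have h3 : IsProbabilityMeasure
      (P.map (fun ω => sInf ((fun t => X t ω - X 0 ω) '' Set.Icc 0 (0 + 1)))) :=
    Measure.isProbabilityMeasure_map (measurable_Dinf hX 0).aemeasurable
  refine ext_of_generate_finite _
    (generateFrom_eq_prod gen_Iic gen_Iio span_Iic span_Iio).symm
    (pi_Iic.prod pi_Iio) ?_ (by rw [measure_univ, measure_univ])
  rintro - ⟨-, ⟨a, rfl⟩, -, ⟨b, rfl⟩, rfl⟩
  rw [Measure.map_apply hpairm (measurableSet_Iic.prod measurableSet_Iio),
    Measure.prod_prod, Measure.map_apply (hX.meas N) measurableSet_Iic,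
    Measure.map_apply (measurable_Dinf hX 0) measurableSet_Iio,
    Set.mk_preimage_prod]
  have hIioD : ∀ M : ℝ, (fun ω => sInf ((fun t => X t ω - X M ω) '' Set.Icc M (M + 1))) ⁻¹'
      Set.Iio b = {ω | sInf ((fun t => X t ω - X M ω) '' Set.Icc M (M + 1)) < b} := fun M => rfl
  rw [hIioD, setOf_Dinf_lt hX N b, Set.inter_iUnion]
  have hmono : Monotone fun K : ℕ => X N ⁻¹' Set.Iic a ∩ incvec X N K ⁻¹' CF K b :=
    fun K L h => Set.inter_subset_inter le_rfl (monotone_CF_preimage hX N b h)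
  rw [Directed.measure_iUnion hmono.directed_le]
  have hterm : ∀ K : ℕ, P (X N ⁻¹' Set.Iic a ∩ incvec X N K ⁻¹' CF K b)
      = P (X N ⁻¹' Set.Iic a) * P (incvec X 0 K ⁻¹' CF K b) :=
    fun K => FD hX N hN K measurableSet_Iic (CF_measurable K b)
  rw [iSup_congr hterm, ← ENNReal.mul_iSup]
  congr 1
  rw [← Directed.measure_iUnion (monotone_CF_preimage hX 0 b).directed_le,
    ← setOf_Dinf_lt hX 0 b]
  rfl

lemma sSup_incr_eq (ω : Ω) (N : ℝ) :
    sSup ((fun t => X t ω - X N ω) '' Set.Icc N (N + 1))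
      = sSup ((fun t => X t ω) '' Set.Icc N (N + 1)) - X N ω := by
  have hA : BddAbove ((fun t => X t ω) '' Set.Icc N (N + 1)) := by
    have := incr_bddAbove hX ω 0 N (N + 1)
    simpa using this
  have hne : ((fun t => X t ω) '' Set.Icc N (N + 1)).Nonempty :=
    ⟨X N ω, Set.mem_image_of_mem _ ⟨le_refl N, by linarith⟩⟩
  have hmono : Monotone fun y : ℝ => y - X N ω := fun x y h => by simpa using h
  have := hmono.map_csSup_of_continuousAt
    (continuousAt_id.sub continuousAt_const) hne hA
  rw [Set.image_image] at this
  exact this.symm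

lemma sInf_incr_eq (ω : Ω) (N : ℝ) :
    sInf ((fun t => X t ω - X N ω) '' Set.Icc N (N + 1))
      = sInf ((fun t => X t ω) '' Set.Icc N (N + 1)) - X N ω := by
  have hA : BddBelow ((fun t => X t ω) '' Set.Icc N (N + 1)) := by
    have := incr_bddBelow hX ω 0 N (N + 1)
    simpa using this
  have hne : ((fun t => X t ω) '' Set.Icc N (N + 1)).Nonempty :=
    ⟨X N ω, Set.mem_image_of_mem _ ⟨le_refl N, by linarith⟩⟩
  have hmono : Monotone fun y : ℝ => y - X N ω := fun x y h => by simpa using h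
  have := hmono.map_csInf_of_continuousAt
    (continuousAt_id.sub continuousAt_const) hne hA
  rw [Set.image_image] at this
  exact this.symm

lemma D0_sup_eq (ω : Ω) :
    sSup ((fun t => X t ω - X 0 ω) '' Set.Icc (0:ℝ) (0 + 1))
      = sSup ((fun t => X t ω) '' Set.Icc (0:ℝ) 1) := by
  have h : (fun t => X t ω - X 0 ω) = fun t => X t ω := by
    funext t; rw [hX.init ω, sub_zero]
  rw [h]
  norm_num

lemma D0_inf_eq (ω : Ω) :
    sInf ((fun t => X t ω - X 0 ω) '' Set.Icc (0:ℝ) (0 + 1))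
      = sInf ((fun t => X t ω) '' Set.Icc (0:ℝ) 1) := by
  have h : (fun t => X t ω - X 0 ω) = fun t => X t ω := by
    funext t; rw [hX.init ω, sub_zero]
  rw [h]
  norm_num

lemma key_sup (N : ℝ) (hN : 0 ≤ N) (r : ℝ) :
    P {ω | sSup ((fun t => X t ω) '' Set.Icc N (N + 1)) ≤ r}
      = ∫⁻ ω, P {ω' | X N ω' ≤ r - sSup ((fun t => X t ω) '' Set.Icc (0:ℝ) 1)} ∂P := by
  have hsetm : MeasurableSet {p : ℝ × ℝ | p.1 + p.2 ≤ r} :=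
    measurableSet_le (measurable_fst.add measurable_snd) measurable_const
  have hpairm : Measurable fun ω =>
      (X N ω, sSup ((fun t => X t ω - X N ω) '' Set.Icc N (N + 1))) :=
    (hX.meas N).prodMk (measurable_Dsup hX N)
  have hev : {ω | sSup ((fun t => X t ω) '' Set.Icc N (N + 1)) ≤ r}
      = (fun ω => (X N ω, sSup ((fun t => X t ω - X N ω) '' Set.Icc N (N + 1)))) ⁻¹'
        {p : ℝ × ℝ | p.1 + p.2 ≤ r} := by
    ext ω
    simp only [Set.mem_setOf_eq, Set.mem_preimage, sSup_incr_eq hX ω N]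
    constructor <;> intro h <;> linarith
  rw [hev, ← Measure.map_apply hpairm hsetm, PL_sup hX N hN,
    Measure.prod_apply_symm hsetm]
  have hint : ∀ y : ℝ, (P.map (X N)) ((fun x => (x, y)) ⁻¹' {p : ℝ × ℝ | p.1 + p.2 ≤ r})
      = (P.map (X N)) (Set.Iic (r - y)) := by
    intro y
    congr 1
    ext x
    simp only [Set.mem_preimage, Set.mem_setOf_eq, Set.mem_Iic]
    constructor <;> intro h <;> linarith
  rw [lintegral_congr hint]
  have hgm : Measurable fun y : ℝ => (P.map (X N)) (Set.Iic (r - y)) := by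
    have : Antitone fun y : ℝ => (P.map (X N)) (Set.Iic (r - y)) := by
      intro y z h
      exact measure_mono (Set.Iic_subset_Iic.mpr (by linarith))
    exact this.measurable
  rw [lintegral_map hgm (measurable_Dsup hX 0)]
  refine lintegral_congr fun ω => ?_
  rw [D0_sup_eq hX ω, Measure.map_apply (hX.meas N) measurableSet_Iic]
  rfl

lemma key_inf (N : ℝ) (hN : 0 ≤ N) (r : ℝ) :
    P {ω | sInf ((fun t => X t ω) '' Set.Icc N (N + 1)) ≤ r}
      = ∫⁻ ω, P {ω' | X N ω' ≤ r - sInf ((fun t => X t ω) '' Set.Icc (0:ℝ) 1)} ∂P := by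
  have hsetm : MeasurableSet {p : ℝ × ℝ | p.1 + p.2 ≤ r} :=
    measurableSet_le (measurable_fst.add measurable_snd) measurable_const
  have hpairm : Measurable fun ω =>
      (X N ω, sInf ((fun t => X t ω - X N ω) '' Set.Icc N (N + 1))) :=
    (hX.meas N).prodMk (measurable_Dinf hX N)
  have hev : {ω | sInf ((fun t => X t ω) '' Set.Icc N (N + 1)) ≤ r}
      = (fun ω => (X N ω, sInf ((fun t => X t ω - X N ω) '' Set.Icc N (N + 1)))) ⁻¹'
        {p : ℝ × ℝ | p.1 + p.2 ≤ r} := by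
    ext ω
    simp only [Set.mem_setOf_eq, Set.mem_preimage, sInf_incr_eq hX ω N]
    constructor <;> intro h <;> linarith
  rw [hev, ← Measure.map_apply hpairm hsetm, PL_inf hX N hN,
    Measure.prod_apply_symm hsetm]
  have hint : ∀ y : ℝ, (P.map (X N)) ((fun x => (x, y)) ⁻¹' {p : ℝ × ℝ | p.1 + p.2 ≤ r})
      = (P.map (X N)) (Set.Iic (r - y)) := by
    intro y
    congr 1
    ext x
    simp only [Set.mem_preimage, Set.mem_setOf_eq, Set.mem_Iic]
    constructor <;> intro h <;> linarith
  rw [lintegral_congr hint]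
  have hgm : Measurable fun y : ℝ => (P.map (X N)) (Set.Iic (r - y)) := by
    have : Antitone fun y : ℝ => (P.map (X N)) (Set.Iic (r - y)) := by
      intro y z h
      exact measure_mono (Set.Iic_subset_Iic.mpr (by linarith))
    exact this.measurable
  rw [lintegral_map hgm (measurable_Dinf hX 0)]
  refine lintegral_congr fun ω => ?_
  rw [D0_inf_eq hX ω, Measure.map_apply (hX.meas N) measurableSet_Iic]
  rfl

omit hX
lemma Ioi_one_eq_iUnion :
    Set.Ioi (1:ℝ) = ⋃ k : ℕ, Set.Ioc ((k:ℝ) + 1) (((k:ℝ) + 1) + 1) := by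
  ext x
  simp only [Set.mem_Ioi, Set.mem_iUnion, Set.mem_Ioc]
  constructor
  · intro hx
    have h2 : 2 ≤ ⌈x⌉₊ := by
      have : 1 < ⌈x⌉₊ := Nat.lt_ceil.mpr (by exact_mod_cast hx)
      omega
    refine ⟨⌈x⌉₊ - 2, ?_, ?_⟩
    · have : ((⌈x⌉₊ - 2 : ℕ) : ℝ) + 1 = ((⌈x⌉₊ - 1 : ℕ) : ℝ) := by
        push_cast [Nat.cast_sub h2, Nat.cast_sub (by omega : 1 ≤ ⌈x⌉₊)]
        ring
      rw [this, ← Nat.lt_ceil]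
      omega
    · have : ((⌈x⌉₊ - 2 : ℕ) : ℝ) + 1 + 1 = (⌈x⌉₊ : ℝ) := by
        push_cast [Nat.cast_sub h2]
        ring
      rw [this]
      exact Nat.le_ceil x
  · rintro ⟨k, h1, -⟩
    have : (0:ℝ) ≤ k := Nat.cast_nonneg k
    linarith

lemma pairwise_disjoint_Ioc :
    Pairwise (Function.onFun Disjoint fun k : ℕ => Set.Ioc ((k:ℝ) + 1) (((k:ℝ) + 1) + 1)) := by
  intro i j hij
  apply Set.Ioc_disjoint_Ioc.mpr
  rcases (Ne.lt_or_gt hij) with h | h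
  · have : (i:ℝ) + 1 ≤ (j:ℝ) := by exact_mod_cast h
    refine le_trans (min_le_left _ _) (le_trans ?_ (le_max_right _ _))
    linarith
  · have : (j:ℝ) + 1 ≤ (i:ℝ) := by exact_mod_cast h
    refine le_trans (min_le_right _ _) (le_trans ?_ (le_max_left _ _))
    linarith
include hX

lemma piece_le (a r u : ℝ) (ha : 0 < a) (hu : 1 ≤ u) :
    (∫⁻ t in Set.Ioc u (u + 1), ENNReal.ofReal (Real.exp (a * t) / t) * P {ω | X t ω ≤ r})
      ≤ ENNReal.ofReal (Real.exp (a * (u + 1)) / u)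
          * P {ω | sInf ((fun t => X t ω) '' Set.Icc u (u + 1)) ≤ r} := by
  set C := ENNReal.ofReal (Real.exp (a * (u + 1)) / u)
    * P {ω | sInf ((fun t => X t ω) '' Set.Icc u (u + 1)) ≤ r} with hC
  have hbound : ∀ t ∈ Set.Ioc u (u + 1),
      ENNReal.ofReal (Real.exp (a * t) / t) * P {ω | X t ω ≤ r} ≤ C := by
    rintro t ⟨ht1, ht2⟩
    have ht : t ∈ Set.Ioc u (u+1) := ⟨ht1, ht2⟩
    apply mul_le_mul'
    · apply ENNReal.ofReal_le_ofReal
      apply div_le_div₀ (Real.exp_pos _).le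
      · exact Real.exp_le_exp.mpr (mul_le_mul_of_nonneg_left ht.2 ha.le)
      · linarith
      · exact le_of_lt ht.1
    · apply measure_mono
      intro ω hω
      have hbb : BddBelow ((fun t => X t ω) '' Set.Icc u (u + 1)) := by
        have := incr_bddBelow hX ω 0 u (u + 1)
        simpa using this
      have hmem : X t ω ∈ (fun t => X t ω) '' Set.Icc u (u + 1) :=
        Set.mem_image_of_mem _ ⟨le_of_lt ht.1, ht.2⟩
      exact le_trans (csInf_le hbb hmem) hω
  calc (∫⁻ t in Set.Ioc u (u + 1), ENNReal.ofReal (Real.exp (a * t) / t) * P {ω | X t ω ≤ r})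
      ≤ ∫⁻ _ in Set.Ioc u (u + 1), C :=
        lintegral_mono_ae ((ae_restrict_iff' measurableSet_Ioc).mpr (Filter.Eventually.of_forall
          hbound))
    _ = C := by
        rw [setLIntegral_const, Real.volume_Ioc]
        norm_num

lemma piece_ge (a r u : ℝ) (ha : 0 < a) (hu : 1 ≤ u) :
    ENNReal.ofReal (Real.exp (a * u) / (u + 1))
        * P {ω | sSup ((fun t => X t ω) '' Set.Icc u (u + 1)) ≤ r}
      ≤ ∫⁻ t in Set.Ioc u (u + 1), ENNReal.ofReal (Real.exp (a * t) / t) * P {ω | X t ω ≤ r} := by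
  set C := ENNReal.ofReal (Real.exp (a * u) / (u + 1))
    * P {ω | sSup ((fun t => X t ω) '' Set.Icc u (u + 1)) ≤ r} with hC
  have hbound : ∀ t ∈ Set.Ioc u (u + 1),
      C ≤ ENNReal.ofReal (Real.exp (a * t) / t) * P {ω | X t ω ≤ r} := by
    rintro t ⟨ht1, ht2⟩
    have ht : t ∈ Set.Ioc u (u+1) := ⟨ht1, ht2⟩
    apply mul_le_mul'
    · apply ENNReal.ofReal_le_ofReal
      apply div_le_div₀ (Real.exp_pos _).le
      · exact Real.exp_le_exp.mpr (mul_le_mul_of_nonneg_left (le_of_lt ht.1) ha.le)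
      · linarith
      · exact ht.2
    · apply measure_mono
      intro ω hω
      have hba : BddAbove ((fun t => X t ω) '' Set.Icc u (u + 1)) := by
        have := incr_bddAbove hX ω 0 u (u + 1)
        simpa using this
      have hmem : X t ω ∈ (fun t => X t ω) '' Set.Icc u (u + 1) :=
        Set.mem_image_of_mem _ ⟨le_of_lt ht.1, ht.2⟩
      exact le_trans (le_csSup hba hmem) hω
  calc C = ∫⁻ _ in Set.Ioc u (u + 1), C := by
        rw [setLIntegral_const, Real.volume_Ioc]
        norm_num
    _ ≤ _ :=
        lintegral_mono_ae ((ae_restrict_iff' measurableSet_Ioc).mpr (Filter.Eventually.of_forall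
          hbound))

lemma measurable_S1fn : Measurable fun ω => sSup ((fun t => X t ω) '' Set.Icc (0:ℝ) 1) := by
  have h : (fun ω => sSup ((fun t => X t ω) '' Set.Icc (0:ℝ) 1))
      = fun ω => sSup ((fun t => X t ω - X 0 ω) '' Set.Icc (0:ℝ) (0 + 1)) :=
    funext fun ω => (D0_sup_eq hX ω).symm
  rw [h]
  exact measurable_Dsup hX 0

lemma measurable_I1fn : Measurable fun ω => sInf ((fun t => X t ω) '' Set.Icc (0:ℝ) 1) := by
  have h : (fun ω => sInf ((fun t => X t ω) '' Set.Icc (0:ℝ) 1))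
      = fun ω => sInf ((fun t => X t ω - X 0 ω) '' Set.Icc (0:ℝ) (0 + 1)) :=
    funext fun ω => (D0_inf_eq hX ω).symm
  rw [h]
  exact measurable_Dinf hX 0

end levy

/-- `V_a^1(x) = Σ_{n≥1} e^{an} n⁻¹ P{X_n ≤ x}`. -/
noncomputable def Vharm {Ω : Type*} [MeasurableSpace Ω] (P : Measure Ω) (X : ℝ → Ω → ℝ)
    (a x : ℝ) : ℝ≥0∞ :=
  ∑' n : ℕ, ENNReal.ofReal (Real.exp (a * (n + 1)) / (n + 1)) * P {ω | X (n + 1 : ℕ) ω ≤ x}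

/-- `S_1 = sup_{0≤t≤1} X_t` and `I_1 = inf_{0≤t≤1} X_t`; the two-sided estimate
`(1/2)·E[V_a^1(r − S_1)] ≤ ∫_1^∞ e^{at} t⁻¹ P{X_t ≤ r} dt ≤ e^a·E[V_a^1(r − I_1)]`. -/
theorem stmt9 {Ω : Type*} [MeasurableSpace Ω] (P : Measure Ω) [IsProbabilityMeasure P]
    (X : ℝ → Ω → ℝ) (hX : IsLevy P X) (a r : ℝ) (ha : 0 < a)
    (S₁ I₁ : Ω → ℝ)
    (hS₁ : ∀ ω, S₁ ω = sSup ((fun t => X t ω) '' Set.Icc (0 : ℝ) 1))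
    (hI₁ : ∀ ω, I₁ ω = sInf ((fun t => X t ω) '' Set.Icc (0 : ℝ) 1)) :
    (2 : ℝ≥0∞)⁻¹ * ∫⁻ ω, Vharm P X a (r - S₁ ω) ∂P ≤
        (∫⁻ t in Set.Ioi (1 : ℝ), ENNReal.ofReal (Real.exp (a * t) / t) * P {ω | X t ω ≤ r}) ∧
    (∫⁻ t in Set.Ioi (1 : ℝ), ENNReal.ofReal (Real.exp (a * t) / t) * P {ω | X t ω ≤ r}) ≤
        ENNReal.ofReal (Real.exp a) * ∫⁻ ω, Vharm P X a (r - I₁ ω) ∂P := by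

  have hdecomp : (∫⁻ t in Set.Ioi (1:ℝ),
        ENNReal.ofReal (Real.exp (a * t) / t) * P {ω | X t ω ≤ r})
      = ∑' k : ℕ, ∫⁻ t in Set.Ioc ((k:ℝ) + 1) (((k:ℝ) + 1) + 1),
          ENNReal.ofReal (Real.exp (a * t) / t) * P {ω | X t ω ≤ r} := by
    rw [Ioi_one_eq_iUnion,
      Measure.restrict_iUnion pairwise_disjoint_Ioc (fun k => measurableSet_Ioc),
      lintegral_sum_measure]
  have hS1m : Measurable S₁ := by
    have h : S₁ = fun ω => sSup ((fun t => X t ω) '' Set.Icc (0:ℝ) 1) := funext hS₁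
    rw [h]; exact measurable_S1fn hX
  have hI1m : Measurable I₁ := by
    have h : I₁ = fun ω => sInf ((fun t => X t ω) '' Set.Icc (0:ℝ) 1) := funext hI₁
    rw [h]; exact measurable_I1fn hX
  have hAnti : ∀ c : ℝ, Antitone fun y : ℝ => P (X c ⁻¹' Set.Iic (r - y)) := by
    intro c y z h
    exact measure_mono (Set.preimage_mono (Set.Iic_subset_Iic.mpr (by linarith)))
  have hone : ∀ n : ℕ, (1:ℝ) ≤ (n:ℝ) + 1 := fun n => by
    have : (0:ℝ) ≤ (n:ℝ) := Nat.cast_nonneg n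
    linarith
  -- expectation identities
  have hVS : (∫⁻ ω, Vharm P X a (r - S₁ ω) ∂P)
      = ∑' n : ℕ, ENNReal.ofReal (Real.exp (a * ((n:ℝ) + 1)) / ((n:ℝ) + 1))
          * P {ω | sSup ((fun t => X t ω) '' Set.Icc ((n:ℝ) + 1) (((n:ℝ) + 1) + 1)) ≤ r} := by
    unfold Vharm
    have hm : ∀ n : ℕ, AEMeasurable (fun ω =>
        ENNReal.ofReal (Real.exp (a * ((n:ℝ) + 1)) / ((n:ℝ) + 1))
          * P {ω' | X ((n + 1 : ℕ) : ℝ) ω' ≤ r - S₁ ω}) P := fun n =>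
      (measurable_const.mul (((hAnti ((n + 1 : ℕ) : ℝ)).measurable).comp hS1m)).aemeasurable
    rw [lintegral_tsum hm]
    refine tsum_congr fun n => ?_
    rw [lintegral_const_mul' _ _ ENNReal.ofReal_ne_top]
    congr 1
    rw [key_sup hX ((n:ℝ) + 1) (by positivity) r]
    refine lintegral_congr fun ω => ?_
    rw [hS₁ ω]
    push_cast
    rfl
  have hVI : (∫⁻ ω, Vharm P X a (r - I₁ ω) ∂P)
      = ∑' n : ℕ, ENNReal.ofReal (Real.exp (a * ((n:ℝ) + 1)) / ((n:ℝ) + 1))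
          * P {ω | sInf ((fun t => X t ω) '' Set.Icc ((n:ℝ) + 1) (((n:ℝ) + 1) + 1)) ≤ r} := by
    unfold Vharm
    have hm : ∀ n : ℕ, AEMeasurable (fun ω =>
        ENNReal.ofReal (Real.exp (a * ((n:ℝ) + 1)) / ((n:ℝ) + 1))
          * P {ω' | X ((n + 1 : ℕ) : ℝ) ω' ≤ r - I₁ ω}) P := fun n =>
      (measurable_const.mul (((hAnti ((n + 1 : ℕ) : ℝ)).measurable).comp hI1m)).aemeasurable
    rw [lintegral_tsum hm]
    refine tsum_congr fun n => ?_
    rw [lintegral_const_mul' _ _ ENNReal.ofReal_ne_top]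
    congr 1
    rw [key_inf hX ((n:ℝ) + 1) (by positivity) r]
    refine lintegral_congr fun ω => ?_
    rw [hI₁ ω]
    push_cast
    rfl
  constructor
  · -- lower bound
    rw [hVS, hdecomp, ENNReal.tsum_mul_left.symm]
    refine ENNReal.tsum_le_tsum fun n => ?_
    refine le_trans ?_ (piece_ge hX a r ((n:ℝ) + 1) ha (hone n))
    rw [← mul_assoc]
    refine mul_le_mul' ?_ le_rfl
    have h2 : (2:ℝ≥0∞)⁻¹ = ENNReal.ofReal 2⁻¹ := by
      rw [ENNReal.ofReal_inv_of_pos two_pos]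
      norm_num
    rw [h2, ← ENNReal.ofReal_mul (by norm_num)]
    apply ENNReal.ofReal_le_ofReal
    have : (2:ℝ)⁻¹ * (Real.exp (a * ((n:ℝ) + 1)) / ((n:ℝ) + 1))
        = Real.exp (a * ((n:ℝ) + 1)) / (2 * ((n:ℝ) + 1)) := by
      have hm : ((n:ℝ) + 1) ≠ 0 := by positivity
      field_simp
    rw [this]
    apply div_le_div₀ (Real.exp_pos _).le le_rfl (by positivity)
    have := hone n
    linarith
  · -- upper bound
    rw [hdecomp, hVI]
    calc (∑' k : ℕ, ∫⁻ t in Set.Ioc ((k:ℝ) + 1) (((k:ℝ) + 1) + 1),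
          ENNReal.ofReal (Real.exp (a * t) / t) * P {ω | X t ω ≤ r})
        ≤ ∑' n : ℕ, ENNReal.ofReal (Real.exp (a * (((n:ℝ) + 1) + 1)) / ((n:ℝ) + 1))
            * P {ω | sInf ((fun t => X t ω) '' Set.Icc ((n:ℝ) + 1) (((n:ℝ) + 1) + 1)) ≤ r} :=
          ENNReal.tsum_le_tsum fun n => piece_le hX a r ((n:ℝ) + 1) ha (hone n)
      _ = ∑' n : ℕ, ENNReal.ofReal (Real.exp a)
            * (ENNReal.ofReal (Real.exp (a * ((n:ℝ) + 1)) / ((n:ℝ) + 1))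
              * P {ω | sInf ((fun t => X t ω) '' Set.Icc ((n:ℝ) + 1) (((n:ℝ) + 1) + 1)) ≤ r}) := by
          refine tsum_congr fun n => ?_
          rw [← mul_assoc, ← ENNReal.ofReal_mul (Real.exp_pos a).le]
          congr 2
          rw [show a * (((n:ℝ) + 1) + 1) = a + a * ((n:ℝ) + 1) by ring, Real.exp_add]
          ring
      _ = ENNReal.ofReal (Real.exp a)
            * ∑' n : ℕ, ENNReal.ofReal (Real.exp (a * ((n:ℝ) + 1)) / ((n:ℝ) + 1))
              * P {ω | sInf ((fun t => X t ω) '' Set.Icc ((n:ℝ) + 1) (((n:ℝ) + 1) + 1)) ≤ r} :=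
          ENNReal.tsum_mul_left
end

section
/- Let X be a Lévy process and fix a > 0, r ∈ ℝ. With I_1 = inf_{0≤t≤1} X_t and S_1 = sup_{0≤t≤1} X_t, one has E[U_a^1(r − S_1)] ≤ ∫_0^∞ e^{at} P{X_t ≤ r} dt ≤ e^a·E[U_a^1(r − I_1)], where U_a^1(x) = Σ_{n≥0} e^{an} P{X_n ≤ x}. -/
open MeasureTheory ProbabilityTheory Set
open scoped ENNReal

/-- `U_a^1(x) = Σ_{n≥0} e^{an} P{X_n ≤ x}`. -/
noncomputable def Uexp {Ω : Type*} [MeasurableSpace Ω] (P : Measure Ω) (X : ℝ → Ω → ℝ)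
    (a x : ℝ) : ℝ≥0∞ :=
  ∑' n : ℕ, ENNReal.ofReal (Real.exp (a * n)) * P {ω | X (n : ℕ) ω ≤ x}



/-- An enumeration of a countable dense subset of `[0,1]` containing `1`. -/
noncomputable def stmt10dd : ℕ → ℝ := fun k => max 0 (min 1 (((Denumerable.eqv ℚ).symm k : ℚ) : ℝ))

lemma stmt10dd_mem (k : ℕ) : stmt10dd k ∈ Icc (0:ℝ) 1 :=
  ⟨le_max_left _ _, max_le (by norm_num) (min_le_left _ _)⟩

lemma stmt10dd_one : ∃ k, stmt10dd k = 1 := by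
  refine ⟨(Denumerable.eqv ℚ) 2, ?_⟩
  simp [stmt10dd]

lemma stmt10dd_btwn {x y : ℝ} (hx : 0 ≤ x) (hxy : x < y) (hy : y ≤ 1) :
    ∃ k, x < stmt10dd k ∧ stmt10dd k < y := by
  obtain ⟨q, hq1, hq2⟩ := exists_rat_btwn hxy
  refine ⟨(Denumerable.eqv ℚ) q, ?_, ?_⟩ <;>
  · have h0q : (0:ℝ) ≤ q := le_of_lt (lt_of_le_of_lt hx hq1)
    have h1q : (q:ℝ) ≤ 1 := le_of_lt (lt_of_lt_of_le hq2 hy)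
    simp only [stmt10dd, Equiv.symm_apply_apply]
    rw [min_eq_right h1q, max_eq_right h0q]
    assumption

section Pathwise
variable {f : ℝ → ℝ}

/-- If `f` is right-continuous and `f(u + dd k) ≤ c` for all `k`, then `f t ≤ c` on `[u, u+1]`. -/
lemma stmt10_approx_le (hf : ∀ t : ℝ, ContinuousWithinAt f (Set.Ici t) t)
    {u t c : ℝ} (hut : u ≤ t) (htu : t ≤ u + 1)
    (h : ∀ k, f (u + stmt10dd k) ≤ c) : f t ≤ c := by
  rcases eq_or_lt_of_le htu with heq | hlt
  · obtain ⟨k, hk⟩ := stmt10dd_one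
    have := h k
    rwa [hk, ← heq] at this
  · by_contra hc
    push_neg at hc
    have hmem : {s | c < f s} ∈ nhdsWithin t (Set.Ici t) := (hf t) (Ioi_mem_nhds hc)
    rw [Metric.mem_nhdsWithin_iff] at hmem
    obtain ⟨ε, hε, hball⟩ := hmem
    obtain ⟨k, hk1, hk2⟩ := stmt10dd_btwn (sub_nonneg.2 hut)
      (show t - u < min (t - u + ε) 1 by
        refine lt_min (by linarith) (by linarith)) (min_le_right _ _)
    have hk2' : stmt10dd k < t - u + ε := lt_of_lt_of_le hk2 (min_le_left _ _)
    have hmemb : u + stmt10dd k ∈ Metric.ball t ε ∩ Set.Ici t := by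
      constructor
      · rw [Metric.mem_ball, Real.dist_eq, abs_of_nonneg (by linarith)]
        linarith
      · simp only [Set.mem_Ici]; linarith
    exact absurd (h k) (not_le.2 (hball hmemb))

lemma stmt10_approx_lt (hf : ∀ t : ℝ, ContinuousWithinAt f (Set.Ici t) t)
    {u s c : ℝ} (hus : u ≤ s) (hsu : s ≤ u + 1)
    (h : f s < c) : ∃ k, f (u + stmt10dd k) < c := by
  rcases eq_or_lt_of_le hsu with heq | hlt
  · obtain ⟨k, hk⟩ := stmt10dd_one
    exact ⟨k, by rwa [hk, ← heq]⟩
  · have hmem : {x | f x < c} ∈ nhdsWithin s (Set.Ici s) := (hf s) (Iio_mem_nhds h)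
    rw [Metric.mem_nhdsWithin_iff] at hmem
    obtain ⟨ε, hε, hball⟩ := hmem
    obtain ⟨k, hk1, hk2⟩ := stmt10dd_btwn (sub_nonneg.2 hus)
      (show s - u < min (s - u + ε) 1 by
        refine lt_min (by linarith) (by linarith)) (min_le_right _ _)
    have hk2' : stmt10dd k < s - u + ε := lt_of_lt_of_le hk2 (min_le_left _ _)
    refine ⟨k, hball ⟨?_, ?_⟩⟩
    · rw [Metric.mem_ball, Real.dist_eq, abs_of_nonneg (by linarith)]
      linarith
    · simp only [Set.mem_Ici]; linarith

/-- A càdlàg function is bounded on compact intervals. -/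
lemma stmt10_cadlag_bounded (hf : ∀ t : ℝ, ContinuousWithinAt f (Set.Ici t) t)
    (hl : ∀ t : ℝ, ∃ l : ℝ, Filter.Tendsto f (nhdsWithin t (Set.Iio t)) (nhds l))
    (u v : ℝ) : ∃ M : ℝ, ∀ s ∈ Set.Icc u v, |f s| ≤ M := by
  have key : ∀ t : ℝ, ∃ U : Set ℝ, U ∈ nhds t ∧ ∃ M, ∀ s ∈ U, |f s| ≤ M := by
    intro t
    obtain ⟨l, hl'⟩ := hl t
    have h1 : ∀ᶠ s in nhdsWithin t (Set.Ici t), |f s| ≤ |f t| + 1 := by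
      filter_upwards [(hf t) (Metric.ball_mem_nhds (f t) one_pos)] with s hs
      rw [Set.mem_preimage, Metric.mem_ball, Real.dist_eq] at hs
      calc |f s| ≤ |f s - f t| + |f t| := by
            simpa using abs_add_le (f s - f t) (f t)
        _ ≤ |f t| + 1 := by linarith [le_of_lt hs]
    have h2 : ∀ᶠ s in nhdsWithin t (Set.Iio t), |f s| ≤ |l| + 1 := by
      filter_upwards [hl' (Metric.ball_mem_nhds l one_pos)] with s hs
      rw [Set.mem_preimage, Metric.mem_ball, Real.dist_eq] at hs
      calc |f s| ≤ |f s - l| + |l| := by simpa using abs_add_le (f s - l) l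
        _ ≤ |l| + 1 := by linarith [le_of_lt hs]
    have hsup : ∀ᶠ s in nhds t, |f s| ≤ max (|f t| + 1) (|l| + 1) := by
      rw [← nhdsLT_sup_nhdsGE t, Filter.eventually_sup]
      constructor
      · filter_upwards [h2] with s hs using le_trans hs (le_max_right _ _)
      · filter_upwards [h1] with s hs using le_trans hs (le_max_left _ _)
    exact ⟨_, hsup, max (|f t| + 1) (|l| + 1), fun s hs => hs⟩
  choose U hU M hM using key
  obtain ⟨T, hT⟩ := (isCompact_Icc (a := u) (b := v)).elim_nhds_subcover'
    (fun x _ => U x) (fun x _ => hU x)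
  rcases T.eq_empty_or_nonempty with hTe | hTne
  · refine ⟨0, fun s hs => absurd (hT hs) ?_⟩
    simp [hTe]
  · refine ⟨T.sup' hTne (fun x => M x), fun s hs => ?_⟩
    obtain ⟨x, hx, hsx⟩ := Set.mem_iUnion₂.mp (hT hs)
    exact le_trans (hM (↑x) s hsx) (Finset.le_sup' (f := fun y : {z // z ∈ Set.Icc u v} => M (y : ℝ)) hx)

end Pathwise

section Joint
variable {Ω : Type*} [MeasurableSpace Ω] (P : Measure Ω) [IsProbabilityMeasure P]

lemma stmt10_map_eq_pi {k : ℕ} (f : Fin k → Ω → ℝ) (hf : ∀ i, Measurable (f i))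
    (h : iIndepFun f P) :
    P.map (fun ω i => f i ω) = Measure.pi (fun i => P.map (f i)) := by
  haveI : ∀ i, IsProbabilityMeasure (P.map (f i)) :=
    fun i => Measure.isProbabilityMeasure_map (hf i).aemeasurable
  refine (Measure.pi_eq fun s hs => ?_).symm
  rw [Measure.map_apply (measurable_pi_lambda _ hf) (MeasurableSet.univ_pi hs)]
  have hset : (fun ω i => f i ω) ⁻¹' Set.pi Set.univ s = ⋂ i ∈ Finset.univ, f i ⁻¹' s i := by
    ext ω; simp [Set.mem_pi]
  rw [hset, h.measure_inter_preimage_eq_mul Finset.univ (fun i _ => hs i)]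
  exact Finset.prod_congr rfl fun i _ => (Measure.map_apply (hf i) (hs i)).symm

lemma stmt10_J {X : ℝ → Ω → ℝ} (hX : IsLevy P X) {n : ℝ} (hn : 0 ≤ n)
    {k : ℕ} (d : Fin (k+1) → ℝ) (hd0 : 0 ≤ d 0) (hmono : Monotone d) :
    P.map (fun ω => (X n ω, fun j : Fin (k+1) => X (n + d j) ω - X n ω)) =
      (P.map (X n)).prod (P.map (fun ω (j : Fin (k+1)) => X (d j) ω)) := by
  have hd : ∀ j : Fin (k+1), 0 ≤ d j := fun j => le_trans hd0 (hmono (Fin.zero_le j))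
  -- grids
  set t : ℕ → ℝ := fun i => match i with
    | 0 => 0
    | 1 => n
    | (i+2) => n + d ⟨min i k, Nat.lt_succ_of_le (min_le_right i k)⟩ with ht
  set u : ℕ → ℝ := fun i => match i with
    | 0 => 0
    | (i+1) => d ⟨min i k, Nat.lt_succ_of_le (min_le_right i k)⟩ with hu
  have htmono : Monotone t := by
    apply monotone_nat_of_le_succ
    intro i
    match i with
    | 0 => exact hn
    | 1 => exact le_add_of_nonneg_right (hd _)
    | (i+2) =>
      exact add_le_add_right (hmono (Fin.mk_le_mk.mpr (min_le_min (Nat.le_succ i) le_rfl))) n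
  have humono : Monotone u := by
    apply monotone_nat_of_le_succ
    intro i
    match i with
    | 0 => exact hd _
    | (i+1) => exact hmono (Fin.mk_le_mk.mpr (min_le_min (Nat.le_succ i) le_rfl))
  have ht0 : ∀ i, 0 ≤ t i := fun i => by
    have := htmono (Nat.zero_le i); exact le_trans (le_of_eq rfl) this
  have hu0 : ∀ i, 0 ≤ u i := fun i => by
    have := humono (Nat.zero_le i); exact le_trans (le_of_eq rfl) this
  -- increment families
  set F : Fin (k+2) → Ω → ℝ := fun i ω => X (t ((i:ℕ)+1)) ω - X (t (i:ℕ)) ω with hF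
  set G : Fin (k+1) → Ω → ℝ := fun j ω => X (u ((j:ℕ)+1)) ω - X (u (j:ℕ)) ω with hG
  have hFmeas : ∀ i, Measurable (F i) := fun i => (hX.meas _).sub (hX.meas _)
  have hGmeas : ∀ j, Measurable (G j) := fun j => (hX.meas _).sub (hX.meas _)
  have hpiF : P.map (fun ω i => F i ω) = Measure.pi (fun i => P.map (F i)) :=
    stmt10_map_eq_pi P F hFmeas (hX.indepIncr (k+2) t htmono (ht0 0))
  have hpiG : P.map (fun ω j => G j ω) = Measure.pi (fun j => P.map (G j)) :=
    stmt10_map_eq_pi P G hGmeas (hX.indepIncr (k+1) u humono (hu0 0))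
  -- marginal identification
  have hfac : ∀ j : Fin (k+1), P.map (F j.succ) = P.map (G j) := by
    intro j
    have h1 : P.map (F j.succ) = P.map (X (t ((j:ℕ)+2) - t ((j:ℕ)+1))) := by
      rw [hF]
      have : (j.succ : ℕ) = (j:ℕ)+1 := Fin.val_succ j
      simp only [this]
      exact hX.stationary _ _ (ht0 _) (htmono (Nat.le_succ _))
    have h2 : P.map (G j) = P.map (X (u ((j:ℕ)+1) - u (j:ℕ))) := by
      rw [hG]
      exact hX.stationary _ _ (hu0 _) (humono (Nat.le_succ _))
    have harg : t ((j:ℕ)+2) - t ((j:ℕ)+1) = u ((j:ℕ)+1) - u (j:ℕ) := by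
      match (j:ℕ) with
      | 0 =>
        show (n + d ⟨min 0 k, Nat.lt_succ_of_le (min_le_right 0 k)⟩) - n
          = d ⟨min 0 k, Nat.lt_succ_of_le (min_le_right 0 k)⟩ - 0
        ring
      | (i+1) =>
        show (n + d ⟨min (i+1) k, Nat.lt_succ_of_le (min_le_right (i+1) k)⟩)
            - (n + d ⟨min i k, Nat.lt_succ_of_le (min_le_right i k)⟩)
          = d ⟨min (i+1) k, Nat.lt_succ_of_le (min_le_right (i+1) k)⟩
            - d ⟨min i k, Nat.lt_succ_of_le (min_le_right i k)⟩
        ring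
    rw [h1, h2, harg]
  have hν0 : P.map (F 0) = P.map (X n) := by
    congr 1
    funext ω
    simp [F, t, hX.init ω]
  -- probability instances
  haveI hPF : ∀ i, IsProbabilityMeasure (P.map (F i)) :=
    fun i => Measure.isProbabilityMeasure_map (hFmeas i).aemeasurable
  haveI hPG : ∀ j, IsProbabilityMeasure (P.map (G j)) :=
    fun j => Measure.isProbabilityMeasure_map (hGmeas j).aemeasurable
  -- partial sums
  set psum : (Fin (k+1) → ℝ) → (Fin (k+1) → ℝ) := fun v j =>
    ∑ i ∈ Finset.range ((j:ℕ)+1), v ⟨min i k, Nat.lt_succ_of_le (min_le_right i k)⟩ with hpsum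
  have hpsum_meas : Measurable psum := by
    refine measurable_pi_lambda _ fun j => ?_
    exact Finset.measurable_sum _ fun i _ => measurable_pi_apply _
  -- the equiv
  set e := MeasurableEquiv.piFinSuccAbove (fun _ : Fin (k+2) => ℝ) 0 with he
  have hmp := measurePreserving_piFinSuccAbove (fun i => P.map (F i)) 0
  -- C2 : target = (id × psum) ∘ e ∘ Fvec
  have hC2 : (fun ω => (X n ω, fun j : Fin (k+1) => X (n + d j) ω - X n ω)) =
      (Prod.map id psum) ∘ (fun v : Fin (k+2) → ℝ => e v) ∘ (fun ω i => F i ω) := by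
    funext ω
    have h0 : e (fun i => F i ω) = (F 0 ω, fun j : Fin (k+1) => F (Fin.succ j) ω) := by
      rw [he, MeasurableEquiv.piFinSuccAbove_apply]
      refine Prod.ext rfl ?_
      funext j
      simp only [Fin.removeNth_zero]
      rfl
    simp only [Function.comp_apply, h0, Prod.map]
    refine Prod.ext ?_ ?_
    · simp [F, t, hX.init ω]
    · funext j
      simp only [hpsum]
      have hterm : ∀ i ∈ Finset.range ((j:ℕ)+1),
          F (Fin.succ ⟨min i k, Nat.lt_succ_of_le (min_le_right i k)⟩) ω
            = X (t (i+2)) ω - X (t (i+1)) ω := by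
        intro i hi
        have hik : min i k = i :=
          min_eq_left (le_trans (Nat.lt_succ_iff.mp (Finset.mem_range.mp hi))
            (Nat.lt_succ_iff.mp j.isLt))
        simp only [F, Fin.val_succ, hik]
      rw [Finset.sum_congr rfl hterm]
      have htel : ∑ i ∈ Finset.range ((j:ℕ)+1), (X (t (i+2)) ω - X (t (i+1)) ω)
          = X (t ((j:ℕ)+2)) ω - X (t 1) ω := by
        have := Finset.sum_range_sub (fun i => X (t (i+1)) ω) ((j:ℕ)+1)
        simpa using this
      rw [htel]
      have hjk : min (j:ℕ) k = (j:ℕ) := min_eq_left (Nat.lt_succ_iff.mp j.isLt)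
      have hdd : t ((j:ℕ)+2) = n + d j := by
        show n + d ⟨min (j:ℕ) k, _⟩ = n + d j
        exact congrArg (fun z => n + z) (congrArg d (Fin.ext (by simpa using hjk)))
      rw [hdd]
  -- C1 : psum ∘ Gvec = (X (d j))_j
  have hC1 : psum ∘ (fun ω j => G j ω) = fun ω (j : Fin (k+1)) => X (d j) ω := by
    funext ω j
    simp only [Function.comp_apply, hpsum]
    have hterm : ∀ i ∈ Finset.range ((j:ℕ)+1),
        G ⟨min i k, Nat.lt_succ_of_le (min_le_right i k)⟩ ω
          = X (u (i+1)) ω - X (u i) ω := by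
      intro i hi
      have hik : min i k = i :=
        min_eq_left (le_trans (Nat.lt_succ_iff.mp (Finset.mem_range.mp hi))
          (Nat.lt_succ_iff.mp j.isLt))
      simp only [G, hik]
    rw [Finset.sum_congr rfl hterm]
    have htel : ∑ i ∈ Finset.range ((j:ℕ)+1), (X (u (i+1)) ω - X (u i) ω)
        = X (u ((j:ℕ)+1)) ω - X (u 0) ω := Finset.sum_range_sub (fun i => X (u i) ω) ((j:ℕ)+1)
    rw [htel]
    have hjk : min (j:ℕ) k = (j:ℕ) := min_eq_left (Nat.lt_succ_iff.mp j.isLt)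
    have h1 : u ((j:ℕ)+1) = d j := by
      show d ⟨min (j:ℕ) k, _⟩ = d j
      exact congrArg d (Fin.ext (by simpa using hjk))
    have h2 : u 0 = 0 := rfl
    rw [h1, h2, hX.init ω, sub_zero]
  -- assemble
  have hFvecMeas : Measurable (fun ω i => F i ω) := measurable_pi_lambda _ hFmeas
  have hGvecMeas : Measurable (fun ω j => G j ω) := measurable_pi_lambda _ hGmeas
  calc P.map (fun ω => (X n ω, fun j : Fin (k+1) => X (n + d j) ω - X n ω))
      = P.map ((Prod.map id psum) ∘ (fun v : Fin (k+2) → ℝ => e v) ∘ (fun ω i => F i ω)) := by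
        rw [hC2]
    _ = Measure.map (Prod.map id psum)
          (Measure.map e (P.map (fun ω i => F i ω))) := by
        rw [Measure.map_map e.measurable hFvecMeas,
          Measure.map_map (measurable_id.prodMap hpsum_meas) (e.measurable.comp hFvecMeas)]
    _ = Measure.map (Prod.map id psum)
          ((P.map (F 0)).prod (Measure.pi fun j => P.map (F ((0 : Fin (k+2)).succAbove j)))) := by
        rw [hpiF, hmp.map_eq]
    _ = (P.map (X n)).prod (Measure.map psum (Measure.pi fun j => P.map (G j))) := by
        have hsucc : (fun j : Fin (k+1) => P.map (F ((0 : Fin (k+2)).succAbove j)))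
            = fun j => P.map (G j) := by
          funext j
          rw [Fin.succAbove_zero]
          exact hfac j
        rw [hsucc, hν0,
          ← Measure.map_prod_map _ _ measurable_id hpsum_meas, Measure.map_id]
    _ = (P.map (X n)).prod (P.map (fun ω (j : Fin (k+1)) => X (d j) ω)) := by
        rw [← hpiG, Measure.map_map hpsum_meas hGvecMeas, hC1]

end Joint

section Steps
variable {Ω : Type*} [MeasurableSpace Ω] (P : Measure Ω) [IsProbabilityMeasure P]
  {X : ℝ → Ω → ℝ}

lemma stmt10_sup_step (hX : IsLevy P X) (r : ℝ) (S₁ : Ω → ℝ)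
    (hub : ∀ ω i, X (stmt10dd i) ω ≤ S₁ ω) (hSmeas : Measurable S₁)
    {n : ℝ} (hn : 0 ≤ n) (m : ℕ) :
    ∫⁻ ω, (P.map (X n)) (Iic (r - S₁ ω)) ∂P
      ≤ P {ω | ∀ i ∈ Finset.range (m+1), X (n + stmt10dd i) ω ≤ r} := by
  classical
  -- sorted grid
  set s : Finset ℝ := (Finset.range (m+1)).image stmt10dd with hs
  have hsne : s.Nonempty := ⟨stmt10dd 0, Finset.mem_image_of_mem _ (by simp)⟩
  set k : ℕ := s.card - 1 with hk
  have hcard : s.card = k + 1 := (Nat.succ_pred_eq_of_pos (Finset.card_pos.mpr hsne)).symm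
  set d : Fin (k+1) → ℝ := fun j => ((s.orderIsoOfFin hcard) j : ℝ) with hd
  have hdmono : Monotone d := fun j j' h => Subtype.coe_le_coe.mpr ((s.orderIsoOfFin hcard).monotone h)
  have hdmem : ∀ j, ∃ i, i ∈ Finset.range (m+1) ∧ stmt10dd i = d j := by
    intro j
    have : (d j) ∈ s := ((s.orderIsoOfFin hcard) j).2
    simpa [hs, Finset.mem_image] using this
  have hd01 : ∀ j, d j ∈ Icc (0:ℝ) 1 := by
    intro j; obtain ⟨i, _, hij⟩ := hdmem j; rw [← hij]; exact stmt10dd_mem i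
  have hd0 : 0 ≤ d 0 := (hd01 0).1
  have hsurj : ∀ i ∈ Finset.range (m+1), ∃ j, d j = stmt10dd i := by
    intro i hi
    have hmem : stmt10dd i ∈ s := Finset.mem_image_of_mem _ hi
    refine ⟨(s.orderIsoOfFin hcard).symm ⟨_, hmem⟩, ?_⟩
    show ((s.orderIsoOfFin hcard) ((s.orderIsoOfFin hcard).symm ⟨_, hmem⟩) : ℝ) = stmt10dd i
    rw [OrderIso.apply_symm_apply]
  have hJ := stmt10_J P hX hn d hd0 hdmono
  set ν : Measure ℝ := P.map (X n) with hν
  set vec : Ω → (Fin (k+1) → ℝ) := fun ω j => X (d j) ω with hvec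
  have hvecmeas : Measurable vec := measurable_pi_lambda _ fun j => hX.meas _
  haveI : IsProbabilityMeasure ν := Measure.isProbabilityMeasure_map (hX.meas n).aemeasurable
  haveI : IsProbabilityMeasure (P.map vec) := Measure.isProbabilityMeasure_map hvecmeas.aemeasurable
  have hne : (Finset.univ : Finset (Fin (k+1))).Nonempty := Finset.univ_nonempty
  -- measurable sets
  have hA : MeasurableSet {p : ℝ × (Fin (k+1) → ℝ) | ∀ j, p.1 + p.2 j ≤ r} := by
    rw [Set.setOf_forall]
    exact MeasurableSet.iInter fun j =>
      measurableSet_le (measurable_fst.add ((measurable_pi_apply j).comp measurable_snd))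
        measurable_const
  have hB : MeasurableSet {q : (Fin (k+1) → ℝ) × ℝ | ∀ j, q.2 + q.1 j ≤ r} := by
    rw [Set.setOf_forall]
    exact MeasurableSet.iInter fun j =>
      measurableSet_le (measurable_snd.add ((measurable_pi_apply j).comp measurable_fst))
        measurable_const
  -- slice identity
  have hslice : ∀ w : Fin (k+1) → ℝ,
      {u : ℝ | ∀ j, u + w j ≤ r} = Iic (r - Finset.univ.sup' hne w) := by
    intro w; ext u
    simp only [mem_setOf_eq, mem_Iic]
    constructor
    · intro h
      have : Finset.univ.sup' hne w ≤ r - u := Finset.sup'_le _ _ fun j _ => by linarith [h j]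
      linarith
    · intro h j
      have := Finset.le_sup' w (Finset.mem_univ j)
      linarith
  have hsupmeas : Measurable (fun w : Fin (k+1) → ℝ => Finset.univ.sup' hne w) := by
    have h1 := Finset.measurable_sup' (s := (Finset.univ : Finset (Fin (k+1)))) hne
      (f := fun j (w : Fin (k+1) → ℝ) => w j) (fun i _ => measurable_pi_apply i)
    have : (Finset.univ.sup' hne (fun j (w : Fin (k+1) → ℝ) => w j))
        = fun w : Fin (k+1) → ℝ => Finset.univ.sup' hne w := by
      funext w; rw [Finset.sup'_apply]
    rwa [this] at h1
  have hmono_meas : Measurable (fun x : ℝ => ν (Iic x)) :=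
    Monotone.measurable (fun x y h => measure_mono (Iic_subset_Iic.mpr h))
  have hgmeas : Measurable (fun w : Fin (k+1) → ℝ => ν (Iic (r - Finset.univ.sup' hne w))) :=
    hmono_meas.comp (measurable_const.sub hsupmeas)
  -- the chain
  calc ∫⁻ ω, ν (Iic (r - S₁ ω)) ∂P
      ≤ ∫⁻ ω, ν (Iic (r - Finset.univ.sup' hne (vec ω))) ∂P := by
        refine lintegral_mono fun ω => measure_mono (Iic_subset_Iic.mpr (sub_le_sub_left ?_ r))
        refine Finset.sup'_le _ _ fun j _ => ?_
        obtain ⟨i, _, hij⟩ := hdmem j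
        calc vec ω j = X (stmt10dd i) ω := by rw [hvec]; simp only; rw [hij]
          _ ≤ S₁ ω := hub ω i
    _ = ∫⁻ w, ν (Iic (r - Finset.univ.sup' hne w)) ∂(P.map vec) := by
        rw [lintegral_map hgmeas hvecmeas]
    _ = ((P.map vec).prod ν) {q : (Fin (k+1) → ℝ) × ℝ | ∀ j, q.2 + q.1 j ≤ r} := by
        rw [Measure.prod_apply hB]
        refine lintegral_congr fun w => ?_
        have : (Prod.mk w ⁻¹' {q : (Fin (k+1) → ℝ) × ℝ | ∀ j, q.2 + q.1 j ≤ r})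
            = {u : ℝ | ∀ j, u + w j ≤ r} := rfl
        rw [this, hslice w]
    _ = (ν.prod (P.map vec)) {p : ℝ × (Fin (k+1) → ℝ) | ∀ j, p.1 + p.2 j ≤ r} := by
        have hswap : (ν.prod (P.map vec)) {p : ℝ × (Fin (k+1) → ℝ) | ∀ j, p.1 + p.2 j ≤ r}
            = ((P.map vec).prod ν) {q : (Fin (k+1) → ℝ) × ℝ | ∀ j, q.2 + q.1 j ≤ r} := by
          rw [← Measure.prod_swap]
          rw [Measure.map_apply measurable_swap hA]
          rfl
        exact hswap.symm
    _ = P ((fun ω => (X n ω, fun j : Fin (k+1) => X (n + d j) ω - X n ω))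
          ⁻¹' {p : ℝ × (Fin (k+1) → ℝ) | ∀ j, p.1 + p.2 j ≤ r}) := by
        rw [← hJ]
        exact Measure.map_apply
          ((hX.meas n).prodMk (measurable_pi_lambda _ fun j => (hX.meas _).sub (hX.meas n))) hA
    _ = P {ω | ∀ i ∈ Finset.range (m+1), X (n + stmt10dd i) ω ≤ r} := by
        congr 1
        ext ω
        simp only [mem_preimage, mem_setOf_eq, add_sub_cancel]
        constructor
        · intro h i hi; obtain ⟨j, hj⟩ := hsurj i hi; rw [← hj]; exact h j
        · intro h j; obtain ⟨i, hi, hij⟩ := hdmem j; rw [← hij]; exact h i hi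

lemma stmt10_inf_step (hX : IsLevy P X) (r' : ℝ) (I₁ : Ω → ℝ)
    (hlb : ∀ ω i, I₁ ω ≤ X (stmt10dd i) ω) (hImeas : Measurable I₁)
    {n : ℝ} (hn : 0 ≤ n) (m : ℕ) :
    P {ω | ∃ i ∈ Finset.range (m+1), X (n + stmt10dd i) ω < r'}
      ≤ ∫⁻ ω, (P.map (X n)) (Iic (r' - I₁ ω)) ∂P := by
  classical
  set s : Finset ℝ := (Finset.range (m+1)).image stmt10dd with hs
  have hsne : s.Nonempty := ⟨stmt10dd 0, Finset.mem_image_of_mem _ (by simp)⟩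
  set k : ℕ := s.card - 1 with hk
  have hcard : s.card = k + 1 := (Nat.succ_pred_eq_of_pos (Finset.card_pos.mpr hsne)).symm
  set d : Fin (k+1) → ℝ := fun j => ((s.orderIsoOfFin hcard) j : ℝ) with hd
  have hdmono : Monotone d := fun j j' h => Subtype.coe_le_coe.mpr ((s.orderIsoOfFin hcard).monotone h)
  have hdmem : ∀ j, ∃ i, i ∈ Finset.range (m+1) ∧ stmt10dd i = d j := by
    intro j
    have : (d j) ∈ s := ((s.orderIsoOfFin hcard) j).2
    simpa [hs, Finset.mem_image] using this
  have hd01 : ∀ j, d j ∈ Icc (0:ℝ) 1 := by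
    intro j; obtain ⟨i, _, hij⟩ := hdmem j; rw [← hij]; exact stmt10dd_mem i
  have hd0 : 0 ≤ d 0 := (hd01 0).1
  have hsurj : ∀ i ∈ Finset.range (m+1), ∃ j, d j = stmt10dd i := by
    intro i hi
    have hmem : stmt10dd i ∈ s := Finset.mem_image_of_mem _ hi
    refine ⟨(s.orderIsoOfFin hcard).symm ⟨_, hmem⟩, ?_⟩
    show ((s.orderIsoOfFin hcard) ((s.orderIsoOfFin hcard).symm ⟨_, hmem⟩) : ℝ) = stmt10dd i
    rw [OrderIso.apply_symm_apply]
  have hJ := stmt10_J P hX hn d hd0 hdmono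
  set ν : Measure ℝ := P.map (X n) with hν
  set vec : Ω → (Fin (k+1) → ℝ) := fun ω j => X (d j) ω with hvec
  have hvecmeas : Measurable vec := measurable_pi_lambda _ fun j => hX.meas _
  haveI : IsProbabilityMeasure ν := Measure.isProbabilityMeasure_map (hX.meas n).aemeasurable
  haveI : IsProbabilityMeasure (P.map vec) := Measure.isProbabilityMeasure_map hvecmeas.aemeasurable
  have hne : (Finset.univ : Finset (Fin (k+1))).Nonempty := Finset.univ_nonempty
  have hA : MeasurableSet {p : ℝ × (Fin (k+1) → ℝ) | ∃ j, p.1 + p.2 j < r'} := by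
    rw [Set.setOf_exists]
    exact MeasurableSet.iUnion fun j =>
      measurableSet_lt (measurable_fst.add ((measurable_pi_apply j).comp measurable_snd))
        measurable_const
  have hB : MeasurableSet {q : (Fin (k+1) → ℝ) × ℝ | ∃ j, q.2 + q.1 j < r'} := by
    rw [Set.setOf_exists]
    exact MeasurableSet.iUnion fun j =>
      measurableSet_lt (measurable_snd.add ((measurable_pi_apply j).comp measurable_fst))
        measurable_const
  have hslice : ∀ w : Fin (k+1) → ℝ,
      {u : ℝ | ∃ j, u + w j < r'} = Iio (r' - Finset.univ.inf' hne w) := by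
    intro w; ext u
    simp only [mem_setOf_eq, mem_Iio]
    constructor
    · rintro ⟨j, hj⟩
      have := Finset.inf'_le w (Finset.mem_univ j)
      linarith
    · intro h
      obtain ⟨j, _, hj⟩ := Finset.exists_mem_eq_inf' hne w
      exact ⟨j, by linarith⟩
  have hinfmeas : Measurable (fun w : Fin (k+1) → ℝ => Finset.univ.inf' hne w) := by
    have h1 : Measurable (Finset.univ.inf' hne (fun j (w : Fin (k+1) → ℝ) => w j)) :=
      Finset.inf'_induction hne _ (fun f hf g hg => Measurable.inf hf hg)
        (fun j _ => measurable_pi_apply j)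
    have : (Finset.univ.inf' hne (fun j (w : Fin (k+1) → ℝ) => w j))
        = fun w : Fin (k+1) → ℝ => Finset.univ.inf' hne w := by
      funext w; rw [Finset.inf'_apply]
    rwa [this] at h1
  have hmono_meas : Measurable (fun x : ℝ => ν (Iio x)) :=
    Monotone.measurable (fun x y h => measure_mono (Iio_subset_Iio h))
  have hgmeas : Measurable (fun w : Fin (k+1) → ℝ => ν (Iio (r' - Finset.univ.inf' hne w))) :=
    hmono_meas.comp (measurable_const.sub hinfmeas)
  calc P {ω | ∃ i ∈ Finset.range (m+1), X (n + stmt10dd i) ω < r'}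
      = P ((fun ω => (X n ω, fun j : Fin (k+1) => X (n + d j) ω - X n ω))
          ⁻¹' {p : ℝ × (Fin (k+1) → ℝ) | ∃ j, p.1 + p.2 j < r'}) := by
        congr 1
        ext ω
        simp only [mem_preimage, mem_setOf_eq, add_sub_cancel]
        constructor
        · rintro ⟨i, hi, hlt⟩; obtain ⟨j, hj⟩ := hsurj i hi; exact ⟨j, by rwa [hj]⟩
        · rintro ⟨j, hj⟩; obtain ⟨i, hi, hij⟩ := hdmem j; exact ⟨i, hi, by rwa [hij]⟩
    _ = (ν.prod (P.map vec)) {p : ℝ × (Fin (k+1) → ℝ) | ∃ j, p.1 + p.2 j < r'} := by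
        rw [← hJ]
        exact (Measure.map_apply
          ((hX.meas n).prodMk (measurable_pi_lambda _ fun j => (hX.meas _).sub (hX.meas n))) hA).symm
    _ = ((P.map vec).prod ν) {q : (Fin (k+1) → ℝ) × ℝ | ∃ j, q.2 + q.1 j < r'} := by
        rw [← Measure.prod_swap]
        rw [Measure.map_apply measurable_swap hA]
        rfl
    _ = ∫⁻ w, ν (Iio (r' - Finset.univ.inf' hne w)) ∂(P.map vec) := by
        rw [Measure.prod_apply hB]
        refine lintegral_congr fun w => ?_
        have : (Prod.mk w ⁻¹' {q : (Fin (k+1) → ℝ) × ℝ | ∃ j, q.2 + q.1 j < r'})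
            = {u : ℝ | ∃ j, u + w j < r'} := rfl
        rw [this, hslice w]
    _ = ∫⁻ ω, ν (Iio (r' - Finset.univ.inf' hne (vec ω))) ∂P := by
        rw [lintegral_map hgmeas hvecmeas]
    _ ≤ ∫⁻ ω, ν (Iic (r' - I₁ ω)) ∂P := by
        refine lintegral_mono fun ω => measure_mono ?_
        intro u hu
        have hI : I₁ ω ≤ Finset.univ.inf' hne (vec ω) := by
          refine Finset.le_inf' _ _ fun j _ => ?_
          obtain ⟨i, _, hij⟩ := hdmem j
          calc I₁ ω ≤ X (stmt10dd i) ω := hlb ω i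
            _ = vec ω j := by rw [hvec]; simp only; rw [hij]
        simp only [mem_Iio] at hu
        simp only [mem_Iic]
        linarith

end Steps


set_option maxHeartbeats 1000000 in
/-- With `S_1 = sup_{0≤t≤1} X_t` and `I_1 = inf_{0≤t≤1} X_t`:
`E[U_a^1(r − S_1)] ≤ ∫_0^∞ e^{at} P{X_t ≤ r} dt ≤ e^a·E[U_a^1(r − I_1)]`. -/
theorem stmt10 {Ω : Type*} [MeasurableSpace Ω] (P : Measure Ω) [IsProbabilityMeasure P]
    (X : ℝ → Ω → ℝ) (hX : IsLevy P X) (a r : ℝ) (ha : 0 < a)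
    (S₁ I₁ : Ω → ℝ)
    (hS₁ : ∀ ω, S₁ ω = sSup ((fun t => X t ω) '' Set.Icc (0 : ℝ) 1))
    (hI₁ : ∀ ω, I₁ ω = sInf ((fun t => X t ω) '' Set.Icc (0 : ℝ) 1)) :
    (∫⁻ ω, Uexp P X a (r - S₁ ω) ∂P) ≤
        (∫⁻ t in Set.Ioi (0 : ℝ), ENNReal.ofReal (Real.exp (a * t)) * P {ω | X t ω ≤ r}) ∧
    (∫⁻ t in Set.Ioi (0 : ℝ), ENNReal.ofReal (Real.exp (a * t)) * P {ω | X t ω ≤ r}) ≤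
        ENNReal.ofReal (Real.exp a) * ∫⁻ ω, Uexp P X a (r - I₁ ω) ∂P := by
  classical
  -- basic path properties
  have hne_img : ∀ ω, ((fun t => X t ω) '' Set.Icc (0:ℝ) 1).Nonempty :=
    fun ω => ⟨X 0 ω, mem_image_of_mem _ (by norm_num : (0:ℝ) ∈ Icc (0:ℝ) 1)⟩
  have hbdd : ∀ ω, ∃ M, ∀ s ∈ Set.Icc (0:ℝ) 1, |X s ω| ≤ M := fun ω =>
    stmt10_cadlag_bounded (hX.rightCont ω) (hX.leftLim ω) 0 1
  have hbddA : ∀ ω, BddAbove ((fun t => X t ω) '' Set.Icc (0:ℝ) 1) := by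
    intro ω; obtain ⟨M, hM⟩ := hbdd ω
    exact ⟨M, fun y ⟨s, hs, hys⟩ => hys ▸ (abs_le.mp (hM s hs)).2⟩
  have hbddB : ∀ ω, BddBelow ((fun t => X t ω) '' Set.Icc (0:ℝ) 1) := by
    intro ω; obtain ⟨M, hM⟩ := hbdd ω
    exact ⟨-M, fun y ⟨s, hs, hys⟩ => hys ▸ (abs_le.mp (hM s hs)).1⟩
  have hub : ∀ ω i, X (stmt10dd i) ω ≤ S₁ ω := fun ω i => by
    rw [hS₁ ω]
    exact le_csSup (hbddA ω) (mem_image_of_mem _ (stmt10dd_mem i))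
  have hlb : ∀ ω i, I₁ ω ≤ X (stmt10dd i) ω := fun ω i => by
    rw [hI₁ ω]
    exact csInf_le (hbddB ω) (mem_image_of_mem _ (stmt10dd_mem i))
  -- measurability of S₁ and I₁
  have hSmeas : Measurable S₁ := by
    refine measurable_of_Iic fun c => ?_
    have hset : S₁ ⁻¹' Iic c = ⋂ i : ℕ, {ω | X (stmt10dd i) ω ≤ c} := by
      ext ω
      simp only [mem_preimage, mem_Iic, mem_iInter, mem_setOf_eq]
      constructor
      · intro h i; exact le_trans (hub ω i) h
      · intro h
        rw [hS₁ ω]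
        refine csSup_le (hne_img ω) ?_
        rintro y ⟨t', ht', rfl⟩
        refine stmt10_approx_le (hX.rightCont ω) ht'.1 (by linarith [ht'.2]) fun k => ?_
        simpa using h k
    rw [hset]
    exact MeasurableSet.iInter fun i => measurableSet_le (hX.meas _) measurable_const
  have hImeas : Measurable I₁ := by
    refine measurable_of_Iic fun c => ?_
    have hset : I₁ ⁻¹' Iic c
        = ⋂ p : ℕ, ⋃ i : ℕ, {ω | X (stmt10dd i) ω < c + 1/(p+1)} := by
      ext ω
      simp only [mem_preimage, mem_Iic, mem_iInter, mem_iUnion, mem_setOf_eq]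
      constructor
      · intro h p
        have hlt : sInf ((fun t => X t ω) '' Set.Icc (0:ℝ) 1) < c + 1/(p+1) := by
          rw [← hI₁ ω]
          have : (0:ℝ) < 1/(p+1) := by positivity
          linarith
        obtain ⟨y, ⟨t', ht', rfl⟩, hy⟩ := exists_lt_of_csInf_lt (hne_img ω) hlt
        obtain ⟨k, hk⟩ := stmt10_approx_lt (hX.rightCont ω) ht'.1 (by linarith [ht'.2]) hy
        exact ⟨k, by simpa using hk⟩
      · intro h
        by_contra hgt
        push_neg at hgt
        obtain ⟨p, hp⟩ := exists_nat_one_div_lt (sub_pos.mpr hgt)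
        obtain ⟨i, hi⟩ := h p
        have := hlb ω i
        have : I₁ ω < c + 1/(p+1) := lt_of_le_of_lt this hi
        have h2 : (1:ℝ)/(p+1) < I₁ ω - c := hp
        linarith
    rw [hset]
    exact MeasurableSet.iInter fun p => MeasurableSet.iUnion fun i =>
      measurableSet_lt (hX.meas _) measurable_const
  -- CDF functions
  set ψ : ℕ → ℝ → ℝ≥0∞ := fun n x => P {ω | X (n : ℕ) ω ≤ x} with hψ
  have hψmono : ∀ n, Monotone (ψ n) := fun n x y hxy =>
    measure_mono (fun ω (h : X _ ω ≤ x) => le_trans h hxy)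
  have hψmeas : ∀ n, Measurable (ψ n) := fun n => (hψmono n).measurable
  have hψle1 : ∀ n x, ψ n x ≤ 1 := fun n x => prob_le_one
  have hmap : ∀ (n : ℕ) (x : ℝ), (P.map (X (n:ℕ))) (Iic x) = ψ n x := fun n x => by
    rw [Measure.map_apply (hX.meas _) measurableSet_Iic]; rfl
  -- the two integral families
  set L : ℕ → ℝ≥0∞ := fun n => ∫⁻ ω, ψ n (r - S₁ ω) ∂P with hL
  set K : ℕ → ℝ≥0∞ := fun n => ∫⁻ ω, ψ n (r - I₁ ω) ∂P with hK
  have hLmeas : ∀ n, Measurable fun ω => ψ n (r - S₁ ω) := fun n =>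
    (hψmeas n).comp (measurable_const.sub hSmeas)
  have hKmeas : ∀ n, Measurable fun ω => ψ n (r - I₁ ω) := fun n =>
    (hψmeas n).comp (measurable_const.sub hImeas)
  -- expand the Uexp integrals
  have hUexpS : ∫⁻ ω, Uexp P X a (r - S₁ ω) ∂P
      = ∑' n : ℕ, ENNReal.ofReal (Real.exp (a * n)) * L n := by
    simp only [Uexp]
    rw [lintegral_tsum fun n => ((hLmeas n).const_mul _).aemeasurable]
    exact tsum_congr fun n => lintegral_const_mul _ (hLmeas n)
  have hUexpI : ∫⁻ ω, Uexp P X a (r - I₁ ω) ∂P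
      = ∑' n : ℕ, ENNReal.ofReal (Real.exp (a * n)) * K n := by
    simp only [Uexp]
    rw [lintegral_tsum fun n => ((hKmeas n).const_mul _).aemeasurable]
    exact tsum_congr fun n => lintegral_const_mul _ (hKmeas n)
  -- PART 1 : lower bound
  have hAall : ∀ n : ℕ, L n ≤ P (⋂ i : ℕ, {ω | X ((n:ℝ) + stmt10dd i) ω ≤ r}) := by
    intro n
    have hLn : L n = ∫⁻ ω, (P.map (X ((n:ℕ):ℝ))) (Iic (r - S₁ ω)) ∂P := by
      rw [hL]
      exact (lintegral_congr fun ω => hmap n (r - S₁ ω)).symm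
    have hanti : Antitone (fun m : ℕ =>
        {ω | ∀ i ∈ Finset.range (m+1), X ((n:ℝ) + stmt10dd i) ω ≤ r}) := by
      intro m m' hmm' ω hω i hi
      exact hω i (Finset.mem_range.mpr (lt_of_lt_of_le (Finset.mem_range.mp hi)
        (by omega)))
    have hiInter : ⋂ m : ℕ, {ω | ∀ i ∈ Finset.range (m+1), X ((n:ℝ) + stmt10dd i) ω ≤ r}
        = ⋂ i : ℕ, {ω | X ((n:ℝ) + stmt10dd i) ω ≤ r} := by
      ext ω
      simp only [mem_iInter, mem_setOf_eq]
      constructor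
      · intro h i; exact h i i (Finset.mem_range.mpr (by omega))
      · intro h m i _; exact h i
    rw [← hiInter,
      Antitone.measure_iInter hanti
        (fun m => by
          have hrw : {ω | ∀ i ∈ Finset.range (m+1), X ((n:ℝ) + stmt10dd i) ω ≤ r}
              = ⋂ i ∈ Finset.range (m+1), {ω | X ((n:ℝ) + stmt10dd i) ω ≤ r} := by
            ext ω; simp only [mem_setOf_eq, mem_iInter]
          rw [hrw]
          exact (MeasurableSet.biInter (Set.to_countable _)
            (fun i _ => measurableSet_le (hX.meas _) measurable_const)).nullMeasurableSet)
        ⟨0, measure_ne_top P _⟩]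
    rw [hLn]
    exact le_iInf fun m => stmt10_sup_step P hX r S₁ hub hSmeas (Nat.cast_nonneg n) m
  have hPart1 : (∫⁻ ω, Uexp P X a (r - S₁ ω) ∂P) ≤
      ∫⁻ t in Set.Ioi (0:ℝ), ENNReal.ofReal (Real.exp (a * t)) * P {ω | X t ω ≤ r} := by
    rw [hUexpS]
    set c : ℕ → ℝ≥0∞ := fun n =>
      ENNReal.ofReal (Real.exp (a * n)) * P (⋂ i : ℕ, {ω | X ((n:ℝ) + stmt10dd i) ω ≤ r})
      with hc
    have hstep : ∑' n : ℕ, ENNReal.ofReal (Real.exp (a * n)) * L n ≤ ∑' n, c n :=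
      Summable.tsum_le_tsum (fun n => mul_le_mul_right (hAall n) _) ENNReal.summable ENNReal.summable
    refine le_trans hstep ?_
    -- step function below the integrand
    set g : ℝ → ℝ≥0∞ := fun t => ∑' n : ℕ, (Set.Ioc (n:ℝ) (n+1)).indicator (fun _ => c n) t
      with hg
    have hgle : ∀ t : ℝ, g t ≤ ENNReal.ofReal (Real.exp (a * t)) * P {ω | X t ω ≤ r} := by
      intro t
      by_cases hex : ∃ n : ℕ, t ∈ Set.Ioc (n:ℝ) (n+1)
      · obtain ⟨n₀, hn₀⟩ := hex
        have huniq : ∀ n : ℕ, n ≠ n₀ → (Set.Ioc (n:ℝ) (n+1)).indicator (fun _ => c n) t = 0 := by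
          intro n hn
          refine Set.indicator_of_notMem (fun hmem => hn ?_) _
          have h1 : (n:ℝ) < t := hmem.1
          have h2 : t ≤ (n:ℝ) + 1 := hmem.2
          have h3 : (n₀:ℝ) < t := hn₀.1
          have h4 : t ≤ (n₀:ℝ) + 1 := hn₀.2
          have hn1 : (n:ℝ) < (n₀:ℝ) + 1 := lt_of_lt_of_le h1 h4
          have hn2 : (n₀:ℝ) < (n:ℝ) + 1 := lt_of_lt_of_le h3 h2
          have hn1' : n < n₀ + 1 := by exact_mod_cast hn1
          have hn2' : n₀ < n + 1 := by exact_mod_cast hn2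
          omega
        rw [hg]
        simp only
        rw [tsum_eq_single n₀ huniq, Set.indicator_of_mem hn₀]
        refine mul_le_mul' (ENNReal.ofReal_le_ofReal (Real.exp_le_exp.mpr
          (mul_le_mul_of_nonneg_left (le_of_lt hn₀.1) (le_of_lt ha)))) ?_
        refine measure_mono fun ω hω => ?_
        simp only [mem_setOf_eq]
        refine stmt10_approx_le (hX.rightCont ω) (le_of_lt hn₀.1) hn₀.2 fun k => ?_
        exact mem_iInter.mp hω k
      · have hzero : ∀ n : ℕ, (Set.Ioc (n:ℝ) (n+1)).indicator (fun _ => c n) t = 0 :=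
          fun n => Set.indicator_of_notMem (fun hmem => hex ⟨n, hmem⟩) _
        rw [hg]
        simp only
        rw [tsum_congr hzero, tsum_zero]
        exact zero_le
    have hgint : ∫⁻ t in Set.Ioi (0:ℝ), g t = ∑' n, c n := by
      rw [hg]
      simp only
      rw [lintegral_tsum fun n =>
        ((measurable_const.indicator measurableSet_Ioc)).aemeasurable]
      refine tsum_congr fun n => ?_
      rw [lintegral_indicator measurableSet_Ioc, setLIntegral_const,
        Measure.restrict_apply measurableSet_Ioc]
      have hsub : Set.Ioc (n:ℝ) (n+1) ∩ Set.Ioi 0 = Set.Ioc (n:ℝ) (n+1) := by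
        refine Set.inter_eq_left.mpr fun x hx => ?_
        have : (0:ℝ) ≤ n := Nat.cast_nonneg n
        exact lt_of_le_of_lt this hx.1
      rw [hsub, Real.volume_Ioc]
      norm_num
    calc ∑' n, c n = ∫⁻ t in Set.Ioi (0:ℝ), g t := hgint.symm
      _ ≤ _ := lintegral_mono hgle
  -- PART 2 : upper bound
  have hKbound : ∀ n : ℕ, ∀ t ∈ Set.Ioc ((n:ℝ)) ((n:ℝ)+1), P {ω | X t ω ≤ r} ≤ K n := by
    intro n t ht
    -- first, bound by the p-family
    have hp : ∀ p : ℕ, P {ω | X t ω ≤ r}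
        ≤ ∫⁻ ω, ψ n (r + 1/(p+1) - I₁ ω) ∂P := by
      intro p
      have hεpos : (0:ℝ) < 1/(p+1) := by positivity
      have hsubset : {ω | X t ω ≤ r}
          ⊆ ⋃ i : ℕ, {ω | X ((n:ℝ) + stmt10dd i) ω < r + 1/(p+1)} := by
        intro ω hω
        have hω' : X t ω ≤ r := hω
        have hlt' : X t ω < r + 1/(p+1) := by linarith
        obtain ⟨k, hk⟩ := stmt10_approx_lt (hX.rightCont ω) (le_of_lt ht.1) ht.2 hlt'
        exact mem_iUnion.mpr ⟨k, hk⟩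
      refine le_trans (measure_mono hsubset) ?_
      have hmonoE : Monotone (fun m : ℕ =>
          {ω | ∃ i ∈ Finset.range (m+1), X ((n:ℝ) + stmt10dd i) ω < r + 1/(p+1)}) := by
        intro m m' hmm' ω ⟨i, hi, hlt⟩
        exact ⟨i, Finset.mem_range.mpr (lt_of_lt_of_le (Finset.mem_range.mp hi) (by omega)), hlt⟩
      have hUeq : ⋃ i : ℕ, {ω | X ((n:ℝ) + stmt10dd i) ω < r + 1/(p+1)}
          = ⋃ m : ℕ, {ω | ∃ i ∈ Finset.range (m+1), X ((n:ℝ) + stmt10dd i) ω < r + 1/(p+1)} := by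
        ext ω
        simp only [mem_iUnion, mem_setOf_eq]
        constructor
        · rintro ⟨i, hi⟩; exact ⟨i, i, Finset.mem_range.mpr (by omega), hi⟩
        · rintro ⟨m, i, _, hi⟩; exact ⟨i, hi⟩
      rw [hUeq, Monotone.measure_iUnion hmonoE]
      refine iSup_le fun m => ?_
      refine le_trans (stmt10_inf_step P hX (r + 1/(p+1)) I₁ hlb hImeas (Nat.cast_nonneg n) m) ?_
      exact le_of_eq (lintegral_congr fun ω => hmap n _)
    -- then pass to the limit in p
    have hfmeas : ∀ p : ℕ, Measurable fun ω => ψ n (r + 1/(p+1) - I₁ ω) := fun p =>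
      (hψmeas n).comp (measurable_const.sub hImeas)
    have hfanti : Antitone fun (p : ℕ) (ω : Ω) => ψ n (r + 1/(p+1) - I₁ ω) := by
      intro p q hpq
      intro ω
      refine hψmono n (by
        have h1 : (1:ℝ)/(q+1) ≤ 1/(p+1) := by
          apply one_div_le_one_div_of_le
          · positivity
          · exact_mod_cast add_le_add_left (Nat.cast_le.mpr hpq) 1
        linarith)
    have hfin : ∫⁻ ω, ψ n (r + 1/(((0:ℕ):ℝ)+1) - I₁ ω) ∂P ≠ ⊤ := by
      refine ne_top_of_le_ne_top (by simp : (1:ℝ≥0∞) ≠ ⊤) ?_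
      calc ∫⁻ ω, ψ n (r + 1/(((0:ℕ):ℝ)+1) - I₁ ω) ∂P ≤ ∫⁻ _, 1 ∂P :=
            lintegral_mono fun ω => hψle1 n _
        _ = 1 := by simp
    have hlim : ⨅ p : ℕ, ∫⁻ ω, ψ n (r + 1/(p+1) - I₁ ω) ∂P = K n := by
      rw [← lintegral_iInf hfmeas hfanti hfin, hK]
      refine lintegral_congr fun ω => ?_
      have hIic : ⋂ p : ℕ, {ω' | X ((n:ℕ):ℝ) ω' ≤ r + 1/(p+1) - I₁ ω}
          = {ω' | X ((n:ℕ):ℝ) ω' ≤ r - I₁ ω} := by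
        ext ω'
        simp only [mem_iInter, mem_setOf_eq]
        constructor
        · intro h
          by_contra hgt
          push_neg at hgt
          obtain ⟨p, hp⟩ := exists_nat_one_div_lt (sub_pos.mpr hgt)
          have := h p
          have h2 : (1:ℝ)/(p+1) < X ((n:ℕ):ℝ) ω' - (r - I₁ ω) := hp
          linarith
        · intro h p
          have : (0:ℝ) < 1/(p+1) := by positivity
          linarith
      have hanti2 : Antitone fun p : ℕ => {ω' | X ((n:ℕ):ℝ) ω' ≤ r + 1/(p+1) - I₁ ω} := by
        intro p q hpq ω' hω'
        have h1 : (1:ℝ)/(q+1) ≤ 1/(p+1) := by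
          apply one_div_le_one_div_of_le
          · positivity
          · exact_mod_cast add_le_add_left (Nat.cast_le.mpr hpq) 1
        simp only [mem_setOf_eq] at hω' ⊢
        linarith
      calc ⨅ p : ℕ, ψ n (r + 1/(p+1) - I₁ ω)
          = P (⋂ p : ℕ, {ω' | X ((n:ℕ):ℝ) ω' ≤ r + 1/(p+1) - I₁ ω}) := by
            rw [Antitone.measure_iInter hanti2
              (fun p => (measurableSet_le (hX.meas _) measurable_const).nullMeasurableSet)
              ⟨0, measure_ne_top P _⟩]
        _ = ψ n (r - I₁ ω) := by rw [hIic]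
    rw [← hlim]
    exact le_iInf hp
  have hPart2 : (∫⁻ t in Set.Ioi (0:ℝ), ENNReal.ofReal (Real.exp (a * t)) * P {ω | X t ω ≤ r})
      ≤ ENNReal.ofReal (Real.exp a) * ∫⁻ ω, Uexp P X a (r - I₁ ω) ∂P := by
    rw [hUexpI]
    set c' : ℕ → ℝ≥0∞ := fun n => ENNReal.ofReal (Real.exp (a * (n+1))) * K n with hc'
    set g' : ℝ → ℝ≥0∞ := fun t => ∑' n : ℕ, (Set.Ioc (n:ℝ) (n+1)).indicator (fun _ => c' n) t
      with hg'
    have hgle : ∀ t ∈ Set.Ioi (0:ℝ),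
        ENNReal.ofReal (Real.exp (a * t)) * P {ω | X t ω ≤ r} ≤ g' t := by
      intro t ht
      have htpos : (0:ℝ) < t := ht
      set n₀ : ℕ := Nat.ceil t - 1 with hn₀def
      have hceil : 1 ≤ Nat.ceil t := Nat.one_le_ceil_iff.mpr htpos
      have hc1 : (Nat.ceil t : ℝ) = (n₀ : ℝ) + 1 := by
        rw [hn₀def]
        push_cast [Nat.cast_sub hceil]
        ring
      have hmem : t ∈ Set.Ioc ((n₀:ℝ)) ((n₀:ℝ)+1) := by
        constructor
        · by_contra hle
          push_neg at hle
          have : Nat.ceil t ≤ n₀ := Nat.ceil_le.mpr hle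
          omega
        · rw [← hc1]; exact Nat.le_ceil t
      have huniq : ∀ n : ℕ, n ≠ n₀ → (Set.Ioc (n:ℝ) (n+1)).indicator (fun _ => c' n) t = 0 := by
        intro n hn
        refine Set.indicator_of_notMem (fun hmem' => hn ?_) _
        have hn1' : n < n₀ + 1 := by exact_mod_cast lt_of_lt_of_le hmem'.1 hmem.2
        have hn2' : n₀ < n + 1 := by exact_mod_cast lt_of_lt_of_le hmem.1 hmem'.2
        omega
      rw [hg']
      simp only
      rw [tsum_eq_single n₀ huniq, Set.indicator_of_mem hmem]
      refine mul_le_mul' (ENNReal.ofReal_le_ofReal (Real.exp_le_exp.mpr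
        (mul_le_mul_of_nonneg_left hmem.2 (le_of_lt ha)))) ?_
      exact hKbound n₀ t hmem
    have hgint : ∫⁻ t in Set.Ioi (0:ℝ), g' t = ∑' n, c' n := by
      rw [hg']
      simp only
      rw [lintegral_tsum fun n =>
        ((measurable_const.indicator measurableSet_Ioc)).aemeasurable]
      refine tsum_congr fun n => ?_
      rw [lintegral_indicator measurableSet_Ioc, setLIntegral_const,
        Measure.restrict_apply measurableSet_Ioc]
      have hsub : Set.Ioc (n:ℝ) (n+1) ∩ Set.Ioi 0 = Set.Ioc (n:ℝ) (n+1) := by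
        refine Set.inter_eq_left.mpr fun x hx => ?_
        exact lt_of_le_of_lt (Nat.cast_nonneg n) hx.1
      rw [hsub, Real.volume_Ioc]
      norm_num
    have hsum : ∑' n, c' n
        = ENNReal.ofReal (Real.exp a) * ∑' n : ℕ, ENNReal.ofReal (Real.exp (a * n)) * K n := by
      rw [← ENNReal.tsum_mul_left]
      refine tsum_congr fun n => ?_
      show ENNReal.ofReal (Real.exp (a * ((n:ℝ)+1))) * K n
          = ENNReal.ofReal (Real.exp a) * (ENNReal.ofReal (Real.exp (a * n)) * K n)
      have hexp : Real.exp (a * ((n:ℝ)+1)) = Real.exp a * Real.exp (a * n) := by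
        rw [← Real.exp_add]
        congr 1
        ring
      rw [hexp, ENNReal.ofReal_mul (le_of_lt (Real.exp_pos a)), mul_assoc]
    calc ∫⁻ t in Set.Ioi (0:ℝ), ENNReal.ofReal (Real.exp (a * t)) * P {ω | X t ω ≤ r}
        ≤ ∫⁻ t in Set.Ioi (0:ℝ), g' t := by
          refine lintegral_mono_ae ?_
          rw [ae_restrict_iff' measurableSet_Ioi]
          exact ae_of_all _ hgle
      _ = ∑' n, c' n := hgint
      _ = _ := hsum
  exact ⟨hPart1, hPart2⟩
end

section
/- Let X be a Lévy process with E[e^{−θ X_1}] < ∞ for some θ > 0. Then E[e^{−θ I_1}] < ∞, where I_1 = inf_{0≤t≤1} X_t. -/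
open MeasureTheory ProbabilityTheory Set
open scoped ENNReal

namespace Stmt11

variable {Ω : Type*} [MeasurableSpace Ω] {P : Measure Ω} {X : ℝ → Ω → ℝ}

noncomputable def em (P : Measure Ω) (X : ℝ → Ω → ℝ) (θ t : ℝ) : ℝ≥0∞ :=
  ∫⁻ ω, ENNReal.ofReal (Real.exp (-θ * X t ω)) ∂P

lemma measurable_incr (hX : IsLevy P X) (s u : ℝ) :
    Measurable (fun ω => X u ω - X s ω) := (hX.meas u).sub (hX.meas s)

lemma measurable_ofReal_exp (θ : ℝ) :
    Measurable fun x : ℝ => ENNReal.ofReal (Real.exp (-θ * x)) := by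
  exact ENNReal.measurable_ofReal.comp ((Real.continuous_exp.measurable).comp
    (measurable_const.mul measurable_id))

lemma measure_incr_event (hX : IsLevy P X) {s u : ℝ} (hs : 0 ≤ s) (hsu : s ≤ u)
    {B : Set ℝ} (hB : MeasurableSet B) :
    P {ω | X u ω - X s ω ∈ B} = P {ω | X (u - s) ω ∈ B} := by
  have h1 := hX.stationary s u hs hsu
  show P ((fun ω => X u ω - X s ω) ⁻¹' B) = P (X (u - s) ⁻¹' B)
  rw [← Measure.map_apply (measurable_incr hX s u) hB,
      ← Measure.map_apply (hX.meas _) hB, h1]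

lemma lintegral_incr (hX : IsLevy P X) {s u : ℝ} (hs : 0 ≤ s) (hsu : s ≤ u)
    {F : ℝ → ℝ≥0∞} (hF : Measurable F) :
    ∫⁻ ω, F (X u ω - X s ω) ∂P = ∫⁻ ω, F (X (u - s) ω) ∂P := by
  have h1 := hX.stationary s u hs hsu
  rw [← lintegral_map hF (measurable_incr hX s u), ← lintegral_map hF (hX.meas _), h1]

lemma indep_incr_pair (hX : IsLevy P X) {s u : ℝ} (hs : 0 ≤ s) (hsu : s ≤ u) :
    IndepFun (X s) (fun ω => X u ω - X s ω) P := by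
  set t : ℕ → ℝ := fun j => if j = 0 then 0 else if j = 1 then s else u with ht
  have hmono : Monotone t := by
    apply monotone_nat_of_le_succ
    intro n
    match n with
    | 0 => simpa [t] using hs
    | 1 => simpa [t] using hsu
    | (n+2) => simp [t]
  have h := hX.indepIncr 2 t hmono (by simp [t])
  have h01 := h.indepFun (i := 0) (j := 1) (by decide)
  have e0 : (fun ω => X (t ((0 : Fin 2) + 1 : ℕ)) ω - X (t ((0 : Fin 2) : ℕ)) ω) = X s := by
    funext ω
    simp [t, hX.init ω]
  have e1 : (fun ω => X (t ((1 : Fin 2) + 1 : ℕ)) ω - X (t ((1 : Fin 2) : ℕ)) ω)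
      = fun ω => X u ω - X s ω := by
    funext ω
    simp [t]
  rwa [e0, e1] at h01

end Stmt11

namespace Stmt11

variable {Ω : Type*} [MeasurableSpace Ω] {P : Measure Ω} [IsProbabilityMeasure P] {X : ℝ → Ω → ℝ}

lemma em_zero (θ : ℝ) (hX : IsLevy P X) : em P X θ 0 = 1 := by
  simp [em, hX.init]

lemma em_add (hX : IsLevy P X) (θ : ℝ) {s t' : ℝ} (hs : 0 ≤ s) (ht : 0 ≤ t') :
    em P X θ (s + t') = em P X θ s * em P X θ t' := by
  have hpair := indep_incr_pair hX hs (le_add_of_nonneg_right ht)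
  have hmeasI := measurable_incr hX s (s + t')
  have hmeas := measurable_ofReal_exp θ
  have hmap : ∫⁻ ω, ENNReal.ofReal (Real.exp (-θ * (X (s + t') ω - X s ω))) ∂P
      = ∫⁻ ω, ENNReal.ofReal (Real.exp (-θ * X t' ω)) ∂P := by
    have := lintegral_incr hX hs (le_add_of_nonneg_right ht) (F := fun x => ENNReal.ofReal (Real.exp (-θ * x))) hmeas
    simpa using this
  have h2 : IndepFun (fun ω => ENNReal.ofReal (Real.exp (-θ * X s ω)))
      (fun ω => ENNReal.ofReal (Real.exp (-θ * (X (s + t') ω - X s ω)))) P :=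
    hpair.comp hmeas hmeas
  have h3 := lintegral_mul_eq_lintegral_mul_lintegral_of_indepFun''
      ((hmeas.comp (hX.meas s)).aemeasurable) ((hmeas.comp hmeasI).aemeasurable) h2
  simp only [Function.comp] at h3
  show ∫⁻ ω, ENNReal.ofReal (Real.exp (-θ * X (s + t') ω)) ∂P = _
  rw [em, em, ← hmap, ← h3]
  congr 1
  funext ω
  rw [← ENNReal.ofReal_mul (Real.exp_nonneg _), ← Real.exp_add]
  ring_nf

lemma em_nat_div (hX : IsLevy P X) (θ : ℝ) (M : ℕ) (hM : M ≠ 0) (k : ℕ) :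
    em P X θ ((k : ℝ) / M) = (em P X θ (1 / M)) ^ k := by
  induction k with
  | zero => simpa using em_zero θ hX
  | succ k ih =>
      have he : ((k + 1 : ℕ) : ℝ) / M = (k : ℝ) / M + 1 / M := by
        rw [Nat.cast_succ, add_div]
      rw [he, em_add hX θ (by positivity) (by positivity), ih, pow_succ]

lemma em_grid_le (hX : IsLevy P X) (θ : ℝ) (M : ℕ) (hM : M ≠ 0) {k : ℕ} (hk : k ≤ M) :
    em P X θ ((k : ℝ) / M) ≤ max 1 (em P X θ 1) := by
  have h1 : em P X θ 1 = (em P X θ (1 / M)) ^ M := by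
    have := em_nat_div hX θ M hM M
    rwa [div_self (by exact_mod_cast hM : (M : ℝ) ≠ 0)] at this
  rw [em_nat_div hX θ M hM k, h1]
  rcases le_total (em P X θ (1 / M)) 1 with h | h
  · exact le_max_of_le_left (pow_le_one' h k)
  · exact le_max_of_le_right (pow_le_pow_right₀ h hk)

lemma markov (hX : IsLevy P X) (θ : ℝ) (hθ : 0 < θ) (s a : ℝ) :
    P {ω | X s ω ≤ a} ≤ ENNReal.ofReal (Real.exp (θ * a)) * em P X θ s := by
  have hm := hX.meas s
  have hmeas := measurable_ofReal_exp θ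
  have key := mul_meas_ge_le_lintegral₀ (μ := P) ((hmeas.comp hm).aemeasurable)
      (ENNReal.ofReal (Real.exp (-θ * a)))
  have hsub : P {ω | X s ω ≤ a}
      ≤ P {x | ENNReal.ofReal (Real.exp (-θ * a)) ≤ (fun x => ENNReal.ofReal (Real.exp (-θ * x))) (X s x)} := by
    apply measure_mono
    intro ω hω
    simp only [mem_setOf_eq] at hω ⊢
    apply ENNReal.ofReal_le_ofReal
    apply Real.exp_le_exp.2
    nlinarith
  calc P {ω | X s ω ≤ a}
      = ENNReal.ofReal (Real.exp (θ * a)) * (ENNReal.ofReal (Real.exp (-θ * a)) * P {ω | X s ω ≤ a}) := by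
        rw [← mul_assoc, ← ENNReal.ofReal_mul (Real.exp_nonneg _), ← Real.exp_add]
        simp
    _ ≤ ENNReal.ofReal (Real.exp (θ * a)) * em P X θ s := by
        gcongr
        exact le_trans (mul_le_mul_right hsub _) key

end Stmt11

namespace Stmt11

variable {Ω : Type*} [MeasurableSpace Ω] {P : Measure Ω} [IsProbabilityMeasure P] {X : ℝ → Ω → ℝ}

def Grid (s : ℝ) : Prop := ∃ M k : ℕ, M ≠ 0 ∧ k ≤ M ∧ s = (k : ℝ) / M

lemma Grid.nonneg {s : ℝ} (h : Grid s) : 0 ≤ s := by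
  obtain ⟨M, k, hM, hk, rfl⟩ := h
  positivity

lemma Grid.le_one {s : ℝ} (h : Grid s) : s ≤ 1 := by
  obtain ⟨M, k, hM, hk, rfl⟩ := h
  have hMpos : (0:ℝ) < M := by exact_mod_cast Nat.pos_of_ne_zero hM
  apply div_le_one_of_le₀ ?_ hMpos.le
  exact_mod_cast hk

lemma Grid.one_sub {s : ℝ} (h : Grid s) : Grid (1 - s) := by
  obtain ⟨M, k, hM, hk, rfl⟩ := h
  have hMpos : (0:ℝ) < M := by exact_mod_cast Nat.pos_of_ne_zero hM
  refine ⟨M, M - k, hM, Nat.sub_le _ _, ?_⟩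
  rw [Nat.cast_sub hk]
  field_simp

lemma grid_em_le (hX : IsLevy P X) (θ : ℝ) {s : ℝ} (hs : Grid s) :
    em P X θ s ≤ max 1 (em P X θ 1) := by
  obtain ⟨M, k, hM, hk, rfl⟩ := hs
  exact em_grid_le hX θ M hM hk

lemma lower_tail (hX : IsLevy P X) (θ : ℝ) (hθ : 0 < θ) (hC : em P X θ 1 ≠ ∞) :
    ∃ v : ℝ, 0 < v ∧ ∀ s : ℝ, Grid s → P {ω | X s ω ≤ -v} ≤ 2⁻¹ := by
  set Cm := max 1 (em P X θ 1) with hCmdef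
  have hCm : Cm ≠ ∞ := by
    simp [hCmdef, hC]
  have htend : Filter.Tendsto (fun v : ℝ => ENNReal.ofReal (Real.exp (θ * (-v))) * Cm)
      Filter.atTop (nhds 0) := by
    have h1 : Filter.Tendsto (fun v : ℝ => Real.exp (θ * (-v))) Filter.atTop (nhds 0) := by
      apply Real.tendsto_exp_atBot.comp
      exact Filter.tendsto_neg_atTop_atBot.const_mul_atBot hθ
    have h2 := (ENNReal.tendsto_ofReal h1)
    simpa using ENNReal.Tendsto.mul_const h2 (Or.inr hCm)
  have hev : ∀ᶠ v : ℝ in Filter.atTop,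
      ENNReal.ofReal (Real.exp (θ * (-v))) * Cm < 2⁻¹ :=
    htend.eventually_lt_const (by norm_num)
  obtain ⟨v, hv1, hv2⟩ := (hev.and (Filter.eventually_gt_atTop 0)).exists
  refine ⟨v, hv2, fun s hs => ?_⟩
  calc P {ω | X s ω ≤ -v} ≤ ENNReal.ofReal (Real.exp (θ * (-v))) * em P X θ s :=
        markov hX θ hθ s (-v)
    _ ≤ ENNReal.ofReal (Real.exp (θ * (-v))) * Cm := by gcongr; exact grid_em_le hX θ hs
    _ ≤ 2⁻¹ := hv1.le

lemma upper_tail (hX : IsLevy P X) (θ : ℝ) (hθ : 0 < θ) (hC : em P X θ 1 ≠ ∞) :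
    ∃ u : ℝ, 0 < u ∧ ∀ s : ℝ, Grid s → P {ω | u < X s ω} ≤ 2⁻¹ := by
  obtain ⟨v, hv, hvbd⟩ := lower_tail hX θ hθ hC
  -- upper tail of X 1
  have htail : ∃ n : ℕ, P {ω | (n : ℝ) < X 1 ω} ≤ 4⁻¹ := by
    have hmeas : ∀ n : ℕ, NullMeasurableSet {ω | (n : ℝ) < X 1 ω} P :=
      fun n => ((hX.meas 1) measurableSet_Ioi).nullMeasurableSet
    have hanti : Antitone fun n : ℕ => {ω | (n : ℝ) < X 1 ω} := by
      intro n m hnm ω hω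
      simp only [mem_setOf_eq] at hω ⊢
      have : (n : ℝ) ≤ m := by exact_mod_cast hnm
      linarith
    have hempty : (⋂ n : ℕ, {ω | (n : ℝ) < X 1 ω}) = ∅ := by
      ext ω
      simp only [mem_iInter, mem_setOf_eq, mem_empty_iff_false, iff_false, not_forall, not_lt]
      obtain ⟨n, hn⟩ := exists_nat_gt (X 1 ω)
      exact ⟨n, hn.le⟩
    have := tendsto_measure_iInter_atTop (μ := P) hmeas hanti ⟨0, measure_ne_top _ _⟩
    rw [hempty] at this
    simp only [measure_empty] at this
    have hev := this.eventually_lt_const (show (0:ℝ≥0∞) < 4⁻¹ by norm_num)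
    obtain ⟨n, hn⟩ := hev.exists
    exact ⟨n, hn.le⟩
  obtain ⟨n, hn⟩ := htail
  refine ⟨n + v, by positivity, fun s hs => ?_⟩
  have hpair := indep_incr_pair hX hs.nonneg hs.le_one
  have hmul := (indepFun_iff_measure_inter_preimage_eq_mul.mp hpair) (Ioi (n + v)) (Ici (-v))
      measurableSet_Ioi measurableSet_Ici
  -- P of the increment being ≥ -v
  have hincr : 2⁻¹ ≤ P ((fun ω => X 1 ω - X s ω) ⁻¹' Ici (-v)) := by
    have hcompl : ((fun ω => X 1 ω - X s ω) ⁻¹' Ici (-v))ᶜ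
        = (fun ω => X 1 ω - X s ω) ⁻¹' Iio (-v) := by
      rw [← preimage_compl, compl_Ici]
    have hlt : P ((fun ω => X 1 ω - X s ω) ⁻¹' Iio (-v)) ≤ 2⁻¹ := by
      have hev := measure_incr_event hX hs.nonneg hs.le_one (B := Iio (-v)) measurableSet_Iio
      have : P {ω | X (1 - s) ω < -v} ≤ P {ω | X (1 - s) ω ≤ -v} :=
        measure_mono (fun ω (h : X (1-s) ω < -v) => le_of_lt h)
      calc P ((fun ω => X 1 ω - X s ω) ⁻¹' Iio (-v)) = P {ω | X (1 - s) ω < -v} := hev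
        _ ≤ P {ω | X (1 - s) ω ≤ -v} := this
        _ ≤ 2⁻¹ := hvbd _ hs.one_sub
    have h2 : P ((fun ω => X 1 ω - X s ω) ⁻¹' Ici (-v))
        = 1 - P ((fun ω => X 1 ω - X s ω) ⁻¹' Iio (-v)) := by
      rw [← prob_compl_eq_one_sub ((measurable_incr hX s 1) measurableSet_Iio),
        ← preimage_compl, compl_Iio]
    rw [h2]
    calc (2⁻¹ : ℝ≥0∞) = 1 - 2⁻¹ := by norm_num
      _ ≤ 1 - P ((fun ω => X 1 ω - X s ω) ⁻¹' Iio (-v)) := tsub_le_tsub_left hlt 1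
  -- the intersection is contained in the tail of X 1
  have hsub : (X s ⁻¹' Ioi (n + v) ∩ (fun ω => X 1 ω - X s ω) ⁻¹' Ici (-v))
      ⊆ {ω | (n : ℝ) < X 1 ω} := by
    rintro ω ⟨h1, h2⟩
    simp only [mem_preimage, mem_Ioi, mem_Ici] at h1 h2
    simp only [mem_setOf_eq]
    linarith
  have hkey : P {ω | (n : ℝ) + v < X s ω} * 2⁻¹ ≤ 4⁻¹ := by
    calc P {ω | (n : ℝ) + v < X s ω} * 2⁻¹
        ≤ P (X s ⁻¹' Ioi (n + v)) * P ((fun ω => X 1 ω - X s ω) ⁻¹' Ici (-v)) := by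
          exact mul_le_mul' (le_of_eq rfl) hincr
      _ = P (X s ⁻¹' Ioi (n + v) ∩ (fun ω => X 1 ω - X s ω) ⁻¹' Ici (-v)) := hmul.symm
      _ ≤ P {ω | (n : ℝ) < X 1 ω} := measure_mono hsub
      _ ≤ 4⁻¹ := hn
  calc P {ω | (n:ℝ) + v < X s ω} = (P {ω | (n:ℝ) + v < X s ω} * 2⁻¹) * 2 := by
        rw [mul_assoc, ENNReal.inv_mul_cancel (by norm_num) (by norm_num), mul_one]
    _ ≤ 4⁻¹ * 2 := by gcongr
    _ = 2⁻¹ := by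
        rw [show (4:ℝ≥0∞) = 2*2 by norm_num, ENNReal.mul_inv (by norm_num) (by norm_num), mul_assoc,
          ENNReal.inv_mul_cancel (by norm_num) (by norm_num), mul_one]

end Stmt11

namespace Stmt11

variable {Ω : Type*} [MeasurableSpace Ω] {P : Measure Ω} [IsProbabilityMeasure P] {X : ℝ → Ω → ℝ}

lemma indep_vec (hX : IsLevy P X) (M k : ℕ) (hM : M ≠ 0) (hk : k ≤ M) :
    IndepFun (fun ω (j : Fin (k+1)) => X ((j : ℕ) / M : ℝ) ω)
      (fun ω => X 1 ω - X ((k : ℝ) / M) ω) P := by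
  have hMpos : (0:ℝ) < M := by exact_mod_cast Nat.pos_of_ne_zero hM
  set τ : ℕ → ℝ := fun j => if j ≤ k then (j : ℝ) / M else 1 with hτ
  have hτmono : Monotone τ := by
    intro a b hab
    by_cases ha : a ≤ k <;> by_cases hb : b ≤ k
    · simp only [τ, ha, hb, if_true]
      gcongr
    · simp only [τ, ha, hb, if_true, if_false]
      apply div_le_one_of_le₀ ?_ hMpos.le
      exact_mod_cast le_trans ha hk
    · omega
    · simp [τ, ha, hb]
  have h := hX.indepIncr (k+1) τ hτmono (by simp [τ])
  set g : Fin (k+1) → Ω → ℝ := fun i ω => X (τ ((i:ℕ)+1)) ω - X (τ (i:ℕ)) ω with hg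
  have hgmeas : ∀ i, Measurable (g i) := fun i => measurable_incr hX _ _
  set S : Finset (Fin (k+1)) := Finset.univ.filter (fun i => (i:ℕ) < k) with hS
  set T : Finset (Fin (k+1)) := {Fin.last k} with hT
  have hST : Disjoint S T := by
    rw [Finset.disjoint_left]
    intro i hiS hiT
    simp only [hS, Finset.mem_filter] at hiS
    simp only [hT, Finset.mem_singleton] at hiT
    rw [hiT] at hiS
    simp [Fin.val_last] at hiS
  have hfin := h.indepFun_finset S T hST hgmeas
  set φ : (S → ℝ) → (Fin (k+1) → ℝ) := fun v j =>
    ∑ i ∈ Finset.range (j:ℕ),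
      if h' : i < k then v ⟨⟨i, lt_trans h' (Nat.lt_succ_self k)⟩, by simp [hS, h']⟩ else 0
    with hφ
  set ψ : (T → ℝ) → ℝ := fun v => v ⟨Fin.last k, by simp [hT]⟩ with hψ
  have hφm : Measurable φ := by
    apply measurable_pi_lambda
    intro j
    apply Finset.measurable_sum
    intro i _
    by_cases h' : i < k
    · simp only [dif_pos h']
      exact measurable_pi_apply _
    · simp only [dif_neg h']
      exact measurable_const
  have hψm : Measurable ψ := measurable_pi_apply _
  have hcomp := hfin.comp hφm hψm
  -- identify the two sides
  have keysum : ∀ ω, ∀ n : ℕ, n ≤ k →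
      (∑ i ∈ Finset.range n, if h' : i < k then g ⟨i, lt_trans h' (Nat.lt_succ_self k)⟩ ω else 0)
        = X ((n : ℝ) / M) ω := by
    intro ω n
    induction n with
    | zero => intro _; simp [hX.init ω]
    | succ n ih =>
        intro hn
        have hnk : n < k := hn
        rw [Finset.sum_range_succ, ih (le_of_lt hnk), dif_pos hnk]
        have e1 : τ (n+1) = ((n+1 : ℕ) : ℝ) / M := by simp [τ, hn]
        have e2 : τ n = (n : ℝ) / M := by simp [τ, le_of_lt hnk]
        simp only [hg, e1, e2]
        push_cast
        ring
  have eleft : (φ ∘ fun a (i : S) => g i a) = fun ω (j : Fin (k+1)) => X ((j : ℕ) / M : ℝ) ω := by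
    funext ω j
    have hjk : (j : ℕ) ≤ k := Nat.lt_succ_iff.mp j.isLt
    simpa using keysum ω (j : ℕ) hjk
  have eright : (ψ ∘ fun a (i : T) => g i a) = fun ω => X 1 ω - X ((k : ℝ) / M) ω := by
    funext ω
    have e1 : τ (k+1) = 1 := by simp [τ]
    have e2 : τ k = (k : ℝ) / M := by simp [τ]
    simp [hψ, hg, Fin.val_last, e1, e2]
  rwa [eleft, eright] at hcomp


lemma willekens (hX : IsLevy P X) (θ : ℝ) (hθ : 0 < θ) (hC : em P X θ 1 ≠ ∞) :
    ∃ u0 : ℝ, 0 < u0 ∧ ∀ M : ℕ, M ≠ 0 → ∀ u : ℝ,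
      P {ω | ∃ k ≤ M, X ((k:ℝ)/M) ω < -u} ≤ 2 * P {ω | X 1 ω ≤ -u + u0} := by
  obtain ⟨u0, hu0, hubd⟩ := upper_tail hX θ hθ hC
  refine ⟨u0, hu0, fun M hM u => ?_⟩
  set A : ℕ → Set Ω := fun k =>
    {ω | (∀ j, j < k → -u ≤ X ((j:ℝ)/M) ω) ∧ X ((k:ℝ)/M) ω < -u} with hA
  set D : ℕ → Set Ω := fun k => {ω | X 1 ω - X ((k:ℝ)/M) ω ≤ u0} with hD
  have hAeq : ∀ k, A k = (⋂ j ∈ Finset.range k, (X ((j:ℝ)/M)) ⁻¹' Ici (-u))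
      ∩ (X ((k:ℝ)/M)) ⁻¹' Iio (-u) := by
    intro k
    ext ω
    simp [hA, Finset.mem_range]
  have hAmeas : ∀ k, MeasurableSet (A k) := by
    intro k
    rw [hAeq k]
    exact (MeasurableSet.biInter (Finset.range k).countable_toSet
      (fun j _ => (hX.meas _) measurableSet_Ici)).inter ((hX.meas _) measurableSet_Iio)
  have hDmeas : ∀ k, MeasurableSet (D k) := fun k =>
    (measurable_incr hX ((k:ℝ)/M) 1) measurableSet_Iic
  have hdisj' : ∀ a b : ℕ, a < b → Disjoint (A a) (A b) := by
    intro a b hab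
    rw [Set.disjoint_left]
    intro ω h1 h2
    exact absurd (h2.1 a hab) (not_le.mpr h1.2)
  have hdisj : (↑(Finset.range (M+1)) : Set ℕ).PairwiseDisjoint A := by
    intro a _ b _ hne
    rcases hne.lt_or_gt with h | h
    · exact hdisj' a b h
    · exact (hdisj' b a h).symm
  have hEunion : {ω | ∃ k ≤ M, X ((k:ℝ)/M) ω < -u} = ⋃ k ∈ Finset.range (M+1), A k := by
    ext ω
    simp only [mem_setOf_eq, mem_iUnion, Finset.mem_range, Nat.lt_succ_iff]
    constructor
    · rintro ⟨k, hk, hklt⟩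
      have hex : ∃ k, k ≤ M ∧ X ((k:ℝ)/M) ω < -u := ⟨k, hk, hklt⟩
      refine ⟨Nat.find hex, (Nat.find_spec hex).1, ?_, (Nat.find_spec hex).2⟩
      intro j hj
      have := Nat.find_min hex hj
      push_neg at this
      exact this (le_trans (le_of_lt hj) (Nat.find_spec hex).1)
    · rintro ⟨k, hk, _, hklt⟩
      exact ⟨k, hk, hklt⟩
  have hprod : ∀ k, k ≤ M → P (A k ∩ D k) = P (A k) * P (D k) := by
    intro k hk
    have hiv := indep_vec hX M k hM hk
    set Bk : Set (Fin (k+1) → ℝ) :=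
      {w | (∀ j : Fin (k+1), (j:ℕ) < k → -u ≤ w j) ∧ w (Fin.last k) < -u} with hBk
    have hBkmeas : MeasurableSet Bk := by
      have : Bk = (⋂ j : Fin (k+1), {w : Fin (k+1) → ℝ | (j:ℕ) < k → -u ≤ w j})
          ∩ {w : Fin (k+1) → ℝ | w (Fin.last k) < -u} := by
        ext w; simp [hBk]
      rw [this]
      refine (MeasurableSet.iInter fun j => ?_).inter
        ((measurable_pi_apply (Fin.last k)) measurableSet_Iio)
      by_cases hj : (j:ℕ) < k
      · simp only [hj, true_implies]
        exact (measurable_pi_apply j) measurableSet_Ici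
      · simp only [hj, false_implies]
        exact MeasurableSet.univ
    have hAk : A k = (fun ω (j : Fin (k+1)) => X ((j : ℕ) / M : ℝ) ω) ⁻¹' Bk := by
      ext ω
      simp only [hA, hBk, mem_setOf_eq, mem_preimage, Fin.val_last]
      constructor
      · rintro ⟨h1, h2⟩
        exact ⟨fun j hj => h1 j hj, h2⟩
      · rintro ⟨h1, h2⟩
        refine ⟨fun j hj => ?_, h2⟩
        have := h1 ⟨j, lt_trans hj (Nat.lt_succ_self k)⟩ hj
        simpa using this
    have hDk : D k = (fun ω => X 1 ω - X ((k:ℝ)/M) ω) ⁻¹' Iic u0 := rfl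
    rw [hAk, hDk]
    exact (indepFun_iff_measure_inter_preimage_eq_mul.mp hiv) Bk (Iic u0) hBkmeas measurableSet_Iic
  have hDge : ∀ k, k ≤ M → 2⁻¹ ≤ P (D k) := by
    intro k hk
    have hgrid : Grid ((k:ℝ)/M) := ⟨M, k, hM, hk, rfl⟩
    have hlt : P ((fun ω => X 1 ω - X ((k:ℝ)/M) ω) ⁻¹' Ioi u0) ≤ 2⁻¹ := by
      have hev := measure_incr_event hX hgrid.nonneg hgrid.le_one (B := Ioi u0) measurableSet_Ioi
      calc P ((fun ω => X 1 ω - X ((k:ℝ)/M) ω) ⁻¹' Ioi u0)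
          = P {ω | u0 < X (1 - (k:ℝ)/M) ω} := hev
        _ ≤ 2⁻¹ := hubd _ hgrid.one_sub
    have h2 : P (D k) = 1 - P ((fun ω => X 1 ω - X ((k:ℝ)/M) ω) ⁻¹' Ioi u0) := by
      rw [← prob_compl_eq_one_sub ((measurable_incr hX ((k:ℝ)/M) 1) measurableSet_Ioi),
        ← preimage_compl, compl_Ioi]
      rfl
    rw [h2]
    calc (2⁻¹ : ℝ≥0∞) = 1 - 2⁻¹ := by norm_num
      _ ≤ 1 - P ((fun ω => X 1 ω - X ((k:ℝ)/M) ω) ⁻¹' Ioi u0) := tsub_le_tsub_left hlt 1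
  have hsub : (⋃ k ∈ Finset.range (M+1), (A k ∩ D k)) ⊆ {ω | X 1 ω ≤ -u + u0} := by
    intro ω hω
    simp only [mem_iUnion, Finset.mem_range, Nat.lt_succ_iff] at hω
    obtain ⟨k, hk, hAk, hDk⟩ := hω
    have h1 : X ((k:ℝ)/M) ω < -u := hAk.2
    have h2 : X 1 ω - X ((k:ℝ)/M) ω ≤ u0 := hDk
    simp only [mem_setOf_eq]
    linarith
  have hkey : P {ω | ∃ k ≤ M, X ((k:ℝ)/M) ω < -u} * 2⁻¹ ≤ P {ω | X 1 ω ≤ -u + u0} := by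
    calc P {ω | ∃ k ≤ M, X ((k:ℝ)/M) ω < -u} * 2⁻¹
        = (∑ k ∈ Finset.range (M+1), P (A k)) * 2⁻¹ := by
          rw [hEunion, measure_biUnion_finset hdisj (fun b _ => hAmeas b)]
      _ = ∑ k ∈ Finset.range (M+1), P (A k) * 2⁻¹ := Finset.sum_mul _ _ _
      _ ≤ ∑ k ∈ Finset.range (M+1), P (A k) * P (D k) := by
          apply Finset.sum_le_sum
          intro k hk
          exact mul_le_mul' le_rfl (hDge k (Nat.lt_succ_iff.mp (Finset.mem_range.mp hk)))
      _ = ∑ k ∈ Finset.range (M+1), P (A k ∩ D k) := by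
          refine Finset.sum_congr rfl fun k hk => ?_
          exact (hprod k (Nat.lt_succ_iff.mp (Finset.mem_range.mp hk))).symm
      _ = P (⋃ k ∈ Finset.range (M+1), (A k ∩ D k)) := by
          rw [measure_biUnion_finset]
          · intro a ha b hb hne
            exact Disjoint.mono inf_le_left inf_le_left (hdisj ha hb hne)
          · exact fun b _ => (hAmeas b).inter (hDmeas b)
      _ ≤ P {ω | X 1 ω ≤ -u + u0} := measure_mono hsub
  calc P {ω | ∃ k ≤ M, X ((k:ℝ)/M) ω < -u}
      = (P {ω | ∃ k ≤ M, X ((k:ℝ)/M) ω < -u} * 2⁻¹) * 2 := by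
        rw [mul_assoc, ENNReal.inv_mul_cancel (by norm_num) (by norm_num), mul_one]
    _ ≤ P {ω | X 1 ω ≤ -u + u0} * 2 := by gcongr
    _ = 2 * P {ω | X 1 ω ≤ -u + u0} := mul_comm _ _

end Stmt11

namespace Stmt11

variable {Ω : Type*} [MeasurableSpace Ω] {P : Measure Ω} [IsProbabilityMeasure P] {X : ℝ → Ω → ℝ}

noncomputable def gridMin (X : ℝ → Ω → ℝ) (M : ℕ) (ω : Ω) : ℝ :=
  (Finset.range (M+1)).inf' (by simp) (fun k => X ((k:ℝ)/M) ω)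

lemma measurable_finset_inf' {ι : Type*} (s : Finset ι) (g : ι → Ω → ℝ)
    (hg : ∀ i, Measurable (g i)) :
    ∀ (hs : s.Nonempty), Measurable (fun ω => s.inf' hs (fun i => g i ω)) := by
  induction s using Finset.cons_induction with
  | empty => intro hs; exact absurd hs (by simp)
  | cons a t ha ih =>
    intro hs
    rcases t.eq_empty_or_nonempty with rfl | ht
    · have h : (fun ω => (Finset.cons a ∅ ha).inf' hs fun i => g i ω) = g a := by
        funext ω; simp
      rw [h]; exact hg a
    · have h : (fun ω => (Finset.cons a t ha).inf' hs fun i => g i ω)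
          = fun ω => min (g a ω) (t.inf' ht fun i => g i ω) := by
        funext ω
        rw [Finset.inf'_cons ht]
      rw [h]; exact (hg a).min (ih ht)

lemma measurable_gridMin (hX : IsLevy P X) (M : ℕ) : Measurable (gridMin X M) :=
  measurable_finset_inf' _ _ (fun k => hX.meas _) _

lemma uniform_bound (hX : IsLevy P X) (θ : ℝ) (hθ : 0 < θ) (hC : em P X θ 1 ≠ ∞) :
    ∃ K : ℝ≥0∞, K ≠ ∞ ∧ ∀ M : ℕ, M ≠ 0 →
      ∫⁻ ω, ENNReal.ofReal (Real.exp (-θ * gridMin X M ω)) ∂P ≤ K := by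
  obtain ⟨u0, hu0, hw⟩ := willekens hX θ hθ hC
  refine ⟨2 * (ENNReal.ofReal (Real.exp (θ * u0)) * em P X θ 1), ?_, ?_⟩
  · exact ENNReal.mul_ne_top (by norm_num)
      (ENNReal.mul_ne_top ENNReal.ofReal_ne_top hC)
  intro M hM
  have hmeasY : Measurable fun ω => Real.exp (-θ * gridMin X M ω) :=
    (Real.continuous_exp.measurable).comp (measurable_const.mul (measurable_gridMin hX M))
  rw [lintegral_eq_lintegral_meas_lt P (ae_of_all _ fun ω => Real.exp_nonneg _)
    hmeasY.aemeasurable]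
  have hbd : ∀ t : ℝ, 0 < t → P {ω | t < Real.exp (-θ * gridMin X M ω)}
      ≤ 2 * P {ω | t ≤ Real.exp (θ * u0) * Real.exp (-θ * X 1 ω)} := by
    intro t ht
    have aux1 : ∀ Y : ℝ, (Real.log t < -θ * Y ↔ Y < -(Real.log t / θ)) := by
      intro Y
      constructor <;> intro h
      · have h2 : Real.log t / θ < -Y := by
          rw [div_lt_iff₀ hθ]; nlinarith
        linarith
      · have h2 : Real.log t / θ < -Y := by linarith
        rw [div_lt_iff₀ hθ] at h2; nlinarith
    have e1 : {ω | t < Real.exp (-θ * gridMin X M ω)}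
        = {ω | ∃ k ≤ M, X ((k:ℝ)/M) ω < -(Real.log t / θ)} := by
      ext ω
      simp only [mem_setOf_eq]
      rw [← Real.log_lt_iff_lt_exp ht, aux1]
      constructor
      · intro h2
        rw [gridMin, Finset.inf'_lt_iff] at h2
        obtain ⟨k, hk, hklt⟩ := h2
        exact ⟨k, Nat.lt_succ_iff.mp (Finset.mem_range.mp hk), hklt⟩
      · rintro ⟨k, hk, hklt⟩
        rw [gridMin, Finset.inf'_lt_iff]
        exact ⟨k, Finset.mem_range.mpr (Nat.lt_succ_iff.mpr hk), hklt⟩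
    have e2 : {ω | X 1 ω ≤ -(Real.log t / θ) + u0}
        = {ω | t ≤ Real.exp (θ * u0) * Real.exp (-θ * X 1 ω)} := by
      ext ω
      simp only [mem_setOf_eq]
      rw [← Real.exp_add, ← Real.log_le_iff_le_exp ht]
      constructor
      · intro h
        have h2 : Real.log t / θ ≤ u0 - X 1 ω := by linarith
        rw [div_le_iff₀ hθ] at h2
        nlinarith
      · intro h
        have h2 : Real.log t / θ ≤ u0 - X 1 ω := by
          rw [div_le_iff₀ hθ]; nlinarith
        linarith
    rw [e1, ← e2]
    exact hw M hM (Real.log t / θ)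
  calc ∫⁻ t in Ioi (0:ℝ), P {ω | t < Real.exp (-θ * gridMin X M ω)}
      ≤ ∫⁻ t in Ioi (0:ℝ), 2 * P {ω | t ≤ Real.exp (θ * u0) * Real.exp (-θ * X 1 ω)} := by
        apply lintegral_mono_ae
        filter_upwards [ae_restrict_mem measurableSet_Ioi] with t ht
        exact hbd t ht
    _ = 2 * ∫⁻ t in Ioi (0:ℝ), P {ω | t ≤ Real.exp (θ * u0) * Real.exp (-θ * X 1 ω)} := by
        rw [← lintegral_const_mul' _ _ (by norm_num : (2:ℝ≥0∞) ≠ ⊤)]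
    _ = 2 * ∫⁻ ω, ENNReal.ofReal (Real.exp (θ * u0) * Real.exp (-θ * X 1 ω)) ∂P := by
        congr 1
        have hg : Measurable fun ω => Real.exp (θ * u0) * Real.exp (-θ * X 1 ω) := by
          have := hX.meas 1
          fun_prop
        rw [lintegral_eq_lintegral_meas_le P
          (ae_of_all _ fun ω => by positivity) hg.aemeasurable]
    _ = 2 * (ENNReal.ofReal (Real.exp (θ * u0)) * em P X θ 1) := by
        congr 1
        rw [em, ← lintegral_const_mul' _ _ ENNReal.ofReal_ne_top]
        congr 1
        funext ω
        rw [← ENNReal.ofReal_mul (Real.exp_nonneg _)]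

end Stmt11

namespace Stmt11

variable {Ω : Type*} [MeasurableSpace Ω] {P : Measure Ω} [IsProbabilityMeasure P] {X : ℝ → Ω → ℝ}

lemma gridMin_le (X : ℝ → Ω → ℝ) {M k : ℕ} (hk : k ≤ M) (ω : Ω) :
    gridMin X M ω ≤ X ((k:ℝ)/M) ω :=
  Finset.inf'_le _ (Finset.mem_range.mpr (Nat.lt_succ_iff.mpr hk))

lemma gridMin_nonpos (hX : IsLevy P X) (M : ℕ) (ω : Ω) : gridMin X M ω ≤ 0 := by
  have := gridMin_le X (Nat.zero_le M) ω
  simpa [hX.init ω] using this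

lemma gridMin_antitone (X : ℝ → Ω → ℝ) (N : ℕ) (ω : Ω) :
    gridMin X (2^(N+1)) ω ≤ gridMin X (2^N) ω := by
  apply Finset.le_inf'
  intro k hk
  have hk' : k ≤ 2^N := Nat.lt_succ_iff.mp (Finset.mem_range.mp hk)
  have h2k : 2*k ≤ 2^(N+1) := by rw [pow_succ]; omega
  have hcast : ((k:ℝ))/((2^N:ℕ):ℝ) = (((2*k:ℕ)):ℝ)/((2^(N+1):ℕ):ℝ) := by
    push_cast
    rw [pow_succ]
    have h2 : ((2:ℝ))^N ≠ 0 := by positivity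
    field_simp
  rw [hcast]
  exact gridMin_le X h2k ω

lemma pathwise (hX : IsLevy P X) (θ : ℝ) (hθ : 0 < θ) (ω : Ω) :
    ENNReal.ofReal (Real.exp (-θ * sInf ((fun t => X t ω) '' Set.Icc (0 : ℝ) 1)))
      ≤ ⨆ N : ℕ, ENNReal.ofReal (Real.exp (-θ * gridMin X (2^N) ω)) := by
  set f : ℝ → ℝ := fun t => X t ω with hf
  set S : Set ℝ := f '' Set.Icc (0:ℝ) 1 with hS
  have hSne : S.Nonempty := ⟨f 0, 0, by simp, rfl⟩
  by_cases hbdd : BddBelow S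
  · -- bounded below case
    have key : ∀ ε : ℝ, 0 < ε → ∃ N : ℕ, gridMin X (2^N) ω ≤ sInf S + ε := by
      intro ε hε
      obtain ⟨x, hxS, hxlt⟩ := (csInf_lt_iff hbdd hSne).mp
        (show sInf S < sInf S + ε/2 by linarith)
      obtain ⟨t, htI, rfl⟩ := hxS
      rcases eq_or_lt_of_le htI.2 with h1 | h1
      · -- t = 1
        refine ⟨0, ?_⟩
        have := gridMin_le X (M := 2^0) (k := 1) (by norm_num) ω
        simp only [pow_zero, Nat.cast_one, div_one] at this
        calc gridMin X (2^0) ω ≤ X 1 ω := by simpa using this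
          _ = f t := by rw [h1]
          _ ≤ sInf S + ε := by linarith
      · -- t < 1
        have hc := hX.rightCont ω t
        rw [Metric.continuousWithinAt_iff] at hc
        obtain ⟨δ, hδ, hcd⟩ := hc (ε/2) (by linarith)
        have hmin : 0 < min δ (1 - t) := lt_min hδ (by linarith)
        obtain ⟨N, hN⟩ := exists_pow_lt_of_lt_one hmin (show (1:ℝ)/2 < 1 by norm_num)
        have hpow : (1:ℝ)/2^N < min δ (1-t) := by
          rwa [div_pow, one_pow] at hN
        have h2N : (0:ℝ) < 2^N := by positivity
        set k : ℕ := ⌈t * 2^N⌉₊ with hk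
        have ht0 : 0 ≤ t := htI.1
        have hts : t ≤ (k:ℝ)/2^N := by
          rw [le_div_iff₀ h2N]
          exact Nat.le_ceil _
        have hsk : (k:ℝ)/2^N < t + 1/2^N := by
          rw [div_lt_iff₀ h2N]
          have := Nat.ceil_lt_add_one (show 0 ≤ t * 2^N by positivity)
          calc (k:ℝ) < t * 2^N + 1 := this
            _ = (t + 1/2^N) * 2^N := by field_simp
        have hs1 : (k:ℝ)/2^N < 1 := by
          have : t + 1/2^N < t + (1 - t) := by
            have := lt_of_lt_of_le hpow (min_le_right _ _)
            linarith
          linarith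
        have hkle : k ≤ 2^N := by
          by_contra hcon
          push_neg at hcon
          have : (2^N : ℝ) < k := by exact_mod_cast hcon
          have : (1:ℝ) ≤ (k:ℝ)/2^N := by
            rw [le_div_iff₀ h2N]; linarith
          linarith
        have hdist : dist ((k:ℝ)/2^N) t < δ := by
          rw [Real.dist_eq, abs_of_nonneg (by linarith)]
          have := lt_of_lt_of_le hpow (min_le_left _ _)
          linarith
        have hfs := hcd (show (k:ℝ)/2^N ∈ Set.Ici t from hts) hdist
        rw [Real.dist_eq] at hfs
        have hfs2 : f ((k:ℝ)/2^N) < f t + ε/2 := by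
          have := abs_lt.mp hfs
          linarith [this.1]
        refine ⟨N, le_of_lt ?_⟩
        have hgm := gridMin_le X (M := 2^N) (k := k) hkle ω
        have hcast : ((2^N : ℕ):ℝ) = (2:ℝ)^N := by push_cast; ring
        rw [hcast] at hgm
        calc gridMin X (2^N) ω ≤ X ((k:ℝ)/2^N) ω := hgm
          _ = f ((k:ℝ)/2^N) := rfl
          _ < f t + ε/2 := hfs2
          _ ≤ sInf S + ε := by linarith
    -- limit argument
    have hle : ∀ n : ℕ, ENNReal.ofReal (Real.exp (-θ * (sInf S + 1/(n+1))))
        ≤ ⨆ N : ℕ, ENNReal.ofReal (Real.exp (-θ * gridMin X (2^N) ω)) := by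
      intro n
      obtain ⟨N, hN⟩ := key (1/(n+1)) (by positivity)
      refine le_trans ?_ (le_iSup (fun N : ℕ => ENNReal.ofReal (Real.exp (-θ * gridMin X (2^N) ω))) N)
      apply ENNReal.ofReal_le_ofReal
      apply Real.exp_le_exp.mpr
      nlinarith
    have hlim : Filter.Tendsto (fun n : ℕ => ENNReal.ofReal (Real.exp (-θ * (sInf S + 1/(n+1)))))
        Filter.atTop (nhds (ENNReal.ofReal (Real.exp (-θ * sInf S)))) := by
      apply ENNReal.tendsto_ofReal
      have h1 : Filter.Tendsto (fun n : ℕ => sInf S + 1/((n:ℝ)+1)) Filter.atTop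
          (nhds (sInf S)) := by
        have := tendsto_one_div_add_atTop_nhds_zero_nat (𝕜 := ℝ)
        have h2 := Filter.Tendsto.const_add (sInf S) this
        simpa using h2
      have h3 : Filter.Tendsto (fun n : ℕ => -θ * (sInf S + 1/((n:ℝ)+1))) Filter.atTop
          (nhds (-θ * sInf S)) := h1.const_mul _
      exact (Real.continuous_exp.tendsto _).comp h3
    exact le_of_tendsto hlim (Filter.Eventually.of_forall hle)
  · -- unbounded below: sInf = 0 by convention
    rw [Real.sInf_of_not_bddBelow hbdd]
    refine le_trans ?_ (le_iSup (fun N : ℕ => ENNReal.ofReal (Real.exp (-θ * gridMin X (2^N) ω))) 0)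
    apply ENNReal.ofReal_le_ofReal
    apply Real.exp_le_exp.mpr
    have := gridMin_nonpos hX (2^0) ω
    nlinarith

end Stmt11

/-- If `E[e^{−θX_1}] < ∞` for some `θ > 0`, then `E[e^{−θ I_1}] < ∞`, where
`I_1 = inf_{0≤t≤1} X_t`. -/
theorem stmt11 {Ω : Type*} [MeasurableSpace Ω] (P : Measure Ω) [IsProbabilityMeasure P]
    (X : ℝ → Ω → ℝ) (hX : IsLevy P X) (θ : ℝ) (hθ : 0 < θ)
    (hfin : ∫⁻ ω, ENNReal.ofReal (Real.exp (-θ * X 1 ω)) ∂P < ∞) :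
    ∫⁻ ω, ENNReal.ofReal (Real.exp (-θ * sInf ((fun t => X t ω) '' Set.Icc (0 : ℝ) 1))) ∂P
      < ∞ := by
  have hC : Stmt11.em P X θ 1 ≠ ∞ := ne_of_lt hfin
  obtain ⟨K, hK, hKbd⟩ := Stmt11.uniform_bound hX θ hθ hC
  have hmono : Monotone fun N : ℕ => fun ω =>
      ENNReal.ofReal (Real.exp (-θ * Stmt11.gridMin X (2^N) ω)) := by
    apply monotone_nat_of_le_succ
    intro N ω
    apply ENNReal.ofReal_le_ofReal
    apply Real.exp_le_exp.mpr
    have := Stmt11.gridMin_antitone X N ω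
    nlinarith
  calc ∫⁻ ω, ENNReal.ofReal (Real.exp (-θ * sInf ((fun t => X t ω) '' Set.Icc (0 : ℝ) 1))) ∂P
      ≤ ∫⁻ ω, ⨆ N : ℕ, ENNReal.ofReal (Real.exp (-θ * Stmt11.gridMin X (2^N) ω)) ∂P :=
        lintegral_mono (fun ω => Stmt11.pathwise hX θ hθ ω)
    _ = ⨆ N : ℕ, ∫⁻ ω, ENNReal.ofReal (Real.exp (-θ * Stmt11.gridMin X (2^N) ω)) ∂P := by
        apply lintegral_iSup ?_ hmono
        intro N
        exact (Stmt11.measurable_ofReal_exp θ).comp (Stmt11.measurable_gridMin hX _)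
    _ ≤ K := by
        apply iSup_le
        intro N
        exact hKbd (2^N) (by positivity)
    _ < ∞ := lt_of_le_of_ne le_top hK
end
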